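/- arXiv:2503.16101 — 10 statements merged into one kernel-verified Lean document; each statement's English description precedes it below -/
import Mathlib

section
/- There is no nontrivial non-real eigenfunction y = φ + iψ of the Dirichlet problem such that the zeros of φ and ψ strictly separate one another on an interval including the endpoint a; i.e., it is impossible that φ(a) = ψ(a) = 0, φ has a zero x₀ > a, and between any two consecutive zeros of one of φ, ψ (including a) the other has exactly one zero. Assuming such separation leads to an infinite decreasing sequence of zeros of both φ and ψ accumulating at a, forcing φ'(a) = ψ'(a) = 0 and hence y ≡ 0. -/
open Filter Set

/-- If `f` is continuous within `s` at `x`, vanishes on `s`, and `x ∈ closure s`,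
then `f x = 0`. -/
lemma aux_zero_closure {f : ℝ → ℝ} {s : Set ℝ} {x : ℝ}
    (hf : ContinuousWithinAt f s x) (h : ∀ y ∈ s, f y = 0) (hx : x ∈ closure s) :
    f x = 0 := by
  have hne : (nhdsWithin x s).NeBot := mem_closure_iff_nhdsWithin_neBot.mp hx
  have h1 : Filter.Tendsto f (nhdsWithin x s) (nhds (f x)) := hf
  have h2 : Filter.Tendsto f (nhdsWithin x s) (nhds 0) := by
    refine Filter.Tendsto.congr' ?_ tendsto_const_nhds
    filter_upwards [self_mem_nhdsWithin] with z hz using (h z hz).symm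
  exact tendsto_nhds_unique h1 h2

/-- If `f` has derivative `d` at `a`, `f a = 0`, and `f` has zeros arbitrarily close
to the right of `a`, then `d = 0`. -/
lemma aux_deriv_zero {f : ℝ → ℝ} {a d : ℝ} (hf : HasDerivAt f d a) (hfa : f a = 0)
    (hz : ∀ ε > 0, ∃ x, a < x ∧ x < a + ε ∧ f x = 0) : d = 0 := by
  set s : Set ℝ := {x | a < x ∧ f x = 0} with hs
  have hcl : a ∈ closure s := by
    rw [Metric.mem_closure_iff]
    intro ε hε
    obtain ⟨x, h1, h2, h3⟩ := hz ε hε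
    refine ⟨x, ⟨h1, h3⟩, ?_⟩
    rw [Real.dist_eq, abs_sub_comm, abs_of_pos (by linarith)]
    linarith
  have hne : (nhdsWithin a s).NeBot := mem_closure_iff_nhdsWithin_neBot.mp hcl
  have hsub : s ⊆ {a}ᶜ := fun x hx => hx.1.ne'
  have h1 : Filter.Tendsto (slope f a) (nhdsWithin a s) (nhds d) :=
    (hasDerivAt_iff_tendsto_slope.mp hf).mono_left (nhdsWithin_mono a hsub)
  have h2 : Filter.Tendsto (slope f a) (nhdsWithin a s) (nhds 0) := by
    refine Filter.Tendsto.congr' ?_ tendsto_const_nhds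
    filter_upwards [self_mem_nhdsWithin] with x hx
    simp [slope_def_field, hfa, hx.2]
  exact tendsto_nhds_unique h1 h2

/-- Extraction of a "component": if `f` vanishes at `a` and `t` but not at some
`x ∈ (a, t)`, there are `u < v` in `[a, t]` with `f u = f v = 0` and `f ≠ 0` on `(u, v)`. -/
lemma aux_comp {f : ℝ → ℝ} {a t x : ℝ}
    (hc : ∀ z ∈ Set.Icc a t, ContinuousWithinAt f (Set.Icc a t) z)
    (hfa : f a = 0) (hft : f t = 0) (hx : x ∈ Set.Ioo a t) (hfx : f x ≠ 0) :
    ∃ u v, a ≤ u ∧ u < v ∧ v ≤ t ∧ f u = 0 ∧ f v = 0 ∧ ∀ z ∈ Set.Ioo u v, f z ≠ 0 := by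
  set S1 : Set ℝ := {z | z ∈ Set.Icc a x ∧ f z = 0} with hS1
  set S2 : Set ℝ := {z | z ∈ Set.Icc x t ∧ f z = 0} with hS2
  have haS1 : a ∈ S1 := ⟨⟨le_rfl, hx.1.le⟩, hfa⟩
  have htS2 : t ∈ S2 := ⟨⟨hx.2.le, le_rfl⟩, hft⟩
  have hbdd1 : BddAbove S1 := ⟨x, fun z hz => hz.1.2⟩
  have hbdd2 : BddBelow S2 := ⟨x, fun z hz => hz.1.1⟩
  set u := sSup S1 with hu
  set v := sInf S2 with hv
  have hau : a ≤ u := le_csSup hbdd1 haS1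
  have hux : u ≤ x := csSup_le ⟨a, haS1⟩ (fun z hz => hz.1.2)
  have hxv : x ≤ v := le_csInf ⟨t, htS2⟩ (fun z hz => hz.1.1)
  have hvt : v ≤ t := csInf_le hbdd2 htS2
  have hS1sub : S1 ⊆ Set.Icc a t := fun z hz => ⟨hz.1.1, le_trans hz.1.2 hx.2.le⟩
  have hS2sub : S2 ⊆ Set.Icc a t := fun z hz => ⟨le_trans hx.1.le hz.1.1, hz.1.2⟩
  have hfu : f u = 0 := by
    refine aux_zero_closure ((hc u ⟨hau, le_trans hux hx.2.le⟩).mono hS1sub)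
      (fun z hz => hz.2) (csSup_mem_closure ⟨a, haS1⟩ hbdd1)
  have hfv : f v = 0 := by
    refine aux_zero_closure ((hc v ⟨le_trans hx.1.le hxv, hvt⟩).mono hS2sub)
      (fun z hz => hz.2) (csInf_mem_closure ⟨t, htS2⟩ hbdd2)
  have huxlt : u < x := lt_of_le_of_ne hux (fun h => hfx (h ▸ hfu))
  have hxvlt : x < v := lt_of_le_of_ne hxv (fun h => hfx (by rw [h]; exact hfv))
  refine ⟨u, v, hau, lt_trans huxlt hxvlt, hvt, hfu, hfv, ?_⟩
  intro z hz hfz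
  rcases le_or_gt z x with h | h
  · have : z ∈ S1 := ⟨⟨le_trans hau hz.1.le, h⟩, hfz⟩
    exact absurd (le_csSup hbdd1 this) (not_le.mpr hz.1)
  · have : z ∈ S2 := ⟨⟨h.le, le_trans hz.2.le hvt⟩, hfz⟩
    exact absurd (csInf_le hbdd2 this) (not_le.mpr hz.2)

/-- Key separation lemma: if `f t = 0` with `a < t ≤ b`, then `g` has a zero in `(a, t)`. -/
lemma aux_sep (a b : ℝ) (hab : a < b) (f g : ℝ → ℝ)
    (hfc : ∀ z ∈ Set.Icc a b, ContinuousWithinAt f (Set.Icc a b) z)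
    (hgc : ∀ z ∈ Set.Icc a b, ContinuousWithinAt g (Set.Icc a b) z)
    (hfa : f a = 0) (hga : g a = 0) (hgb : g b = 0)
    (hsepf : ∀ u v, a ≤ u → u < v → v ≤ b → f u = 0 → f v = 0 →
      (∀ x ∈ Set.Ioo u v, f x ≠ 0) → ∃! s, s ∈ Set.Ioo u v ∧ g s = 0)
    (hsepg : ∀ u v, a ≤ u → u < v → v ≤ b → g u = 0 → g v = 0 →
      (∀ x ∈ Set.Ioo u v, g x ≠ 0) → ∃! s, s ∈ Set.Ioo u v ∧ f s = 0)
    (t : ℝ) (hat : a < t) (htb : t ≤ b) (hft : f t = 0) :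
    ∃ s, a < s ∧ s < t ∧ g s = 0 := by
  by_cases hdeg : ∃ x ∈ Set.Ioo a t, f x ≠ 0
  · obtain ⟨x, hx, hfx⟩ := hdeg
    have hsub : Set.Icc a t ⊆ Set.Icc a b := Set.Icc_subset_Icc le_rfl htb
    obtain ⟨u, v, h1, h2, h3, h4, h5, h6⟩ :=
      aux_comp (fun z hz => (hfc z (hsub hz)).mono hsub) hfa hft hx hfx
    obtain ⟨s, ⟨hs, hgs⟩, _⟩ := hsepf u v h1 h2 (le_trans h3 htb) h4 h5 h6
    exact ⟨s, lt_of_le_of_lt h1 hs.1, lt_of_lt_of_le hs.2 h3, hgs⟩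
  · push_neg at hdeg
    by_contra hno
    push_neg at hno
    set Z : Set ℝ := {x | x ∈ Set.Ioc a b ∧ g x = 0} with hZ
    have hZb : b ∈ Z := ⟨⟨hab, le_rfl⟩, hgb⟩
    have hZlb : ∀ z ∈ Z, t ≤ z := by
      intro z hz
      by_contra h
      push_neg at h
      exact hno z hz.1.1 h hz.2
    set v := sInf Z with hvdef
    have hbdd : BddBelow Z := ⟨t, hZlb⟩
    have htv : t ≤ v := le_csInf ⟨b, hZb⟩ hZlb
    have hvb : v ≤ b := csInf_le hbdd hZb
    have hZsub : Z ⊆ Set.Icc a b := fun z hz => ⟨hz.1.1.le, hz.1.2⟩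
    have hgv : g v = 0 := by
      refine aux_zero_closure ((hgc v ⟨le_trans hat.le htv, hvb⟩).mono hZsub)
        (fun z hz => hz.2) (csInf_mem_closure ⟨b, hZb⟩ hbdd)
    have hgs' : ∀ x ∈ Set.Ioo a v, g x ≠ 0 := by
      intro z hz hgz
      rcases lt_or_ge z t with h | h
      · exact hno z hz.1 h hgz
      · have : z ∈ Z := ⟨⟨hz.1, le_trans hz.2.le hvb⟩, hgz⟩
        exact absurd (csInf_le hbdd this) (not_le.mpr hz.2)
    obtain ⟨s, _, huni⟩ := hsepg a v le_rfl (lt_of_lt_of_le hat htv) hvb hga hgv hgs'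
    have e1 : a + (t - a) / 3 = s := by
      refine huni _ ⟨⟨by linarith, by linarith⟩, hdeg _ ⟨by linarith, by linarith⟩⟩
    have e2 : a + (t - a) / 2 = s := by
      refine huni _ ⟨⟨by linarith, by linarith⟩, hdeg _ ⟨by linarith, by linarith⟩⟩
    linarith

theorem stmt_7 (a b : ℝ) (hab : a < b) (q r : ℝ → ℝ) (lam : ℂ) (hlam : lam.im ≠ 0)
    (hq : ContinuousOn q (Set.Icc a b)) (hr : ContinuousOn r (Set.Icc a b))
    (y : ℝ → ℂ) (φ ψ : ℝ → ℝ)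
    (hφ : ∀ x, φ x = (y x).re) (hψ : ∀ x, ψ x = (y x).im)
    (hsmooth : ∀ x ∈ Set.Icc a b, ContDiffAt ℝ 2 y x)
    (hode : ∀ x ∈ Set.Icc a b,
      -(deriv (deriv y) x) + (q x : ℂ) * y x = lam * (r x : ℂ) * y x)
    (hya : y a = 0) (hyb : y b = 0)
    (hnontriv : ∃ x ∈ Set.Icc a b, y x ≠ 0)
    (huniq : y a = 0 → deriv y a = 0 → ∀ x ∈ Set.Icc a b, y x = 0)
    (x₀ : ℝ) (hx₀ : x₀ ∈ Set.Ioc a b) (hφx₀ : φ x₀ = 0)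
    -- separation: between any two consecutive zeros of one of φ, ψ (including
    -- the endpoint a) the other has exactly one zero
    (hsepφ : ∀ u v, a ≤ u → u < v → v ≤ b → φ u = 0 → φ v = 0 →
      (∀ x ∈ Set.Ioo u v, φ x ≠ 0) → ∃! s, s ∈ Set.Ioo u v ∧ ψ s = 0)
    (hsepψ : ∀ u v, a ≤ u → u < v → v ≤ b → ψ u = 0 → ψ v = 0 →
      (∀ x ∈ Set.Ioo u v, ψ x ≠ 0) → ∃! s, s ∈ Set.Ioo u v ∧ φ s = 0) :
    False := by
  have hφeq : φ = fun x => (y x).re := funext hφ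
  have hψeq : ψ = fun x => (y x).im := funext hψ
  have hφa : φ a = 0 := by rw [hφ a, hya]; simp
  have hψa : ψ a = 0 := by rw [hψ a, hya]; simp
  have hφb : φ b = 0 := by rw [hφ b, hyb]; simp
  have hψb : ψ b = 0 := by rw [hψ b, hyb]; simp
  have hφc : ∀ z ∈ Set.Icc a b, ContinuousWithinAt φ (Set.Icc a b) z := by
    intro z hz
    have : ContinuousAt (fun x => (y x).re) z :=
      Complex.continuous_re.continuousAt.comp (hsmooth z hz).continuousAt
    rw [hφeq]
    exact this.continuousWithinAt
  have hψc : ∀ z ∈ Set.Icc a b, ContinuousWithinAt ψ (Set.Icc a b) z := by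
    intro z hz
    have : ContinuousAt (fun x => (y x).im) z :=
      Complex.continuous_im.continuousAt.comp (hsmooth z hz).continuousAt
    rw [hψeq]
    exact this.continuousWithinAt
  have lemA : ∀ t, a < t → t ≤ b → φ t = 0 → ∃ s, a < s ∧ s < t ∧ ψ s = 0 :=
    fun t hat htb hft => aux_sep a b hab φ ψ hφc hψc hφa hψa hψb hsepφ hsepψ t hat htb hft
  have lemB : ∀ t, a < t → t ≤ b → ψ t = 0 → ∃ s, a < s ∧ s < t ∧ φ s = 0 :=
    fun t hat htb hgt => aux_sep a b hab ψ φ hψc hφc hψa hφa hφb hsepψ hsepφ t hat htb hgt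
  -- the sets of zeros in (a, b]
  set Zφ : Set ℝ := {x | x ∈ Set.Ioc a b ∧ φ x = 0} with hZφdef
  set Zψ : Set ℝ := {x | x ∈ Set.Ioc a b ∧ ψ x = 0} with hZψdef
  have hZφne : Zφ.Nonempty := ⟨b, ⟨hab, le_rfl⟩, hφb⟩
  have hZψne : Zψ.Nonempty := ⟨b, ⟨hab, le_rfl⟩, hψb⟩
  have hZφbdd : BddBelow Zφ := ⟨a, fun z hz => hz.1.1.le⟩
  have hZψbdd : BddBelow Zψ := ⟨a, fun z hz => hz.1.1.le⟩
  have hZφsub : Zφ ⊆ Set.Icc a b := fun z hz => ⟨hz.1.1.le, hz.1.2⟩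
  have hZψsub : Zψ ⊆ Set.Icc a b := fun z hz => ⟨hz.1.1.le, hz.1.2⟩
  set cφ := sInf Zφ with hcφdef
  set cψ := sInf Zψ with hcψdef
  have hacφ : a ≤ cφ := le_csInf hZφne (fun z hz => hz.1.1.le)
  have hacψ : a ≤ cψ := le_csInf hZψne (fun z hz => hz.1.1.le)
  have hcφb : cφ ≤ b := csInf_le hZφbdd ⟨⟨hab, le_rfl⟩, hφb⟩
  have hcψb : cψ ≤ b := csInf_le hZψbdd ⟨⟨hab, le_rfl⟩, hψb⟩
  have hφcφ : φ cφ = 0 :=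
    aux_zero_closure ((hφc cφ ⟨hacφ, hcφb⟩).mono hZφsub) (fun z hz => hz.2)
      (csInf_mem_closure hZφne hZφbdd)
  have hψcψ : ψ cψ = 0 :=
    aux_zero_closure ((hψc cψ ⟨hacψ, hcψb⟩).mono hZψsub) (fun z hz => hz.2)
      (csInf_mem_closure hZψne hZψbdd)
  have claim : ¬ (a < cφ ∧ a < cψ) := by
    rintro ⟨h1, h2⟩
    obtain ⟨s, hs1, hs2, hs3⟩ := lemA cφ h1 hcφb hφcφ
    have hle1 : cψ ≤ s := csInf_le hZψbdd ⟨⟨hs1, le_trans hs2.le hcφb⟩, hs3⟩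
    obtain ⟨s', hs1', hs2', hs3'⟩ := lemB cψ h2 hcψb hψcψ
    have hle2 : cφ ≤ s' := csInf_le hZφbdd ⟨⟨hs1', le_trans hs2'.le hcψb⟩, hs3'⟩
    linarith
  have acc : ∀ ε > 0, (∃ x, a < x ∧ x < a + ε ∧ φ x = 0) ∧
      (∃ x, a < x ∧ x < a + ε ∧ ψ x = 0) := by
    intro ε hε
    rcases not_and_or.mp claim with h | h
    · have hcφa : cφ = a := le_antisymm (not_lt.mp h) hacφ
      have : sInf Zφ < a + ε := by rw [← hcφdef, hcφa]; linarith
      obtain ⟨z, hzZ, hzlt⟩ := exists_lt_of_csInf_lt hZφne this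
      obtain ⟨s, hs1, hs2, hs3⟩ := lemA z hzZ.1.1 hzZ.1.2 hzZ.2
      exact ⟨⟨z, hzZ.1.1, hzlt, hzZ.2⟩, ⟨s, hs1, by linarith, hs3⟩⟩
    · have hcψa : cψ = a := le_antisymm (not_lt.mp h) hacψ
      have : sInf Zψ < a + ε := by rw [← hcψdef, hcψa]; linarith
      obtain ⟨z, hzZ, hzlt⟩ := exists_lt_of_csInf_lt hZψne this
      obtain ⟨s, hs1, hs2, hs3⟩ := lemB z hzZ.1.1 hzZ.1.2 hzZ.2
      exact ⟨⟨s, hs1, by linarith, hs3⟩, ⟨z, hzZ.1.1, hzlt, hzZ.2⟩⟩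
  -- derivative of y at a is zero
  have haIcc : a ∈ Set.Icc a b := ⟨le_rfl, hab.le⟩
  have hdiff : DifferentiableAt ℝ y a := (hsmooth a haIcc).differentiableAt (by norm_num)
  have hdy : HasDerivAt y (deriv y a) a := hdiff.hasDerivAt
  have hdre : HasDerivAt φ ((deriv y a).re) a := by
    rw [hφeq]
    have h := Complex.reCLM.hasFDerivAt.comp_hasDerivAt a hdy
    simp only [Complex.reCLM_apply] at h
    exact h
  have hdim : HasDerivAt ψ ((deriv y a).im) a := by
    rw [hψeq]
    have h := Complex.imCLM.hasFDerivAt.comp_hasDerivAt a hdy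
    simp only [Complex.imCLM_apply] at h
    exact h
  have h1 : (deriv y a).re = 0 := aux_deriv_zero hdre hφa (fun ε hε => (acc ε hε).1)
  have h2 : (deriv y a).im = 0 := aux_deriv_zero hdim hψa (fun ε hε => (acc ε hε).2)
  have hd0 : deriv y a = 0 := Complex.ext h1 h2
  obtain ⟨x, hx, hxne⟩ := hnontriv
  exact hxne (huniq hya hd0 x hx)
end

section
/- Let y = φ + iψ solve -y'' + q y = λ r y on [a,b] with y(a) = 0 and Im λ > 0, and let G(x) = ∫_a^x r|y|² dt. Suppose x₁ < x₂ are points in (a,b) with φ(x₁) = φ(x₂) = 0, ψ(x) > 0 on [x₁, x₂], and G(x) > 0 on [x₁, x₂]. Then a contradiction follows; i.e., ψ cannot be strictly positive on [x₁, x₂]. (Since (φ/ψ)' = (Im λ) G / ψ² > 0 there, yet φ/ψ vanishes at both endpoints.) -/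
theorem stmt_9 (a b : ℝ) (hab : a < b) (q r : ℝ → ℝ) (lam : ℂ) (hlam : 0 < lam.im)
    (hq : ContinuousOn q (Set.Icc a b)) (hr : ContinuousOn r (Set.Icc a b))
    (y : ℝ → ℂ) (φ ψ : ℝ → ℝ)
    (hφ : ∀ x, φ x = (y x).re) (hψ : ∀ x, ψ x = (y x).im)
    (hsmooth : ∀ x ∈ Set.Icc a b, ContDiffAt ℝ 2 y x)
    (hode : ∀ x ∈ Set.Icc a b,
      -(deriv (deriv y) x) + (q x : ℂ) * y x = lam * (r x : ℂ) * y x)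
    (hya : y a = 0)
    (G : ℝ → ℝ) (hG : ∀ x, G x = ∫ t in a..x, r t * ‖y t‖ ^ 2)
    (x₁ x₂ : ℝ) (hx₁ : x₁ ∈ Set.Ioo a b) (hx₂ : x₂ ∈ Set.Ioo a b) (hlt : x₁ < x₂)
    (hφ₁ : φ x₁ = 0) (hφ₂ : φ x₂ = 0)
    (hψpos : ∀ x ∈ Set.Icc x₁ x₂, 0 < ψ x)
    (hGpos : ∀ x ∈ Set.Icc x₁ x₂, 0 < G x) :
    False := by
  have hφfun : φ = fun t => (y t).re := funext hφ
  have hψfun : ψ = fun t => (y t).im := funext hψ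
  subst hφfun hψfun
  have hsub : Set.Icc x₁ x₂ ⊆ Set.Icc a b := fun x hx =>
    ⟨hx₁.1.le.trans hx.1, hx.2.trans hx₂.2.le⟩
  -- differentiability facts
  have hy1 : ∀ x ∈ Set.Icc a b, HasDerivAt y (deriv y x) x := fun x hx =>
    ((hsmooth x hx).differentiableAt (by norm_num)).hasDerivAt
  have hy2 : ∀ x ∈ Set.Icc a b, HasDerivAt (deriv y) (deriv (deriv y) x) x := by
    intro x hx
    obtain ⟨u, hu, hyu⟩ := (hsmooth x hx).contDiffOn (le_refl 2) (by simp)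
    obtain ⟨t, hts, ht, hxt⟩ := mem_nhds_iff.mp hu
    have h1 : ContDiffOn ℝ 1 (deriv y) t := (hyu.mono hts).deriv_of_isOpen ht (by norm_num)
    exact ((h1.differentiableOn one_ne_zero).differentiableAt (ht.mem_nhds hxt)).hasDerivAt
  have hycont : ContinuousOn y (Set.Icc a b) := fun x hx =>
    ((hy1 x hx).differentiableAt.continuousAt).continuousWithinAt
  have hφd : ∀ x ∈ Set.Icc a b, HasDerivAt (fun t => (y t).re) (deriv y x).re x := fun x hx =>
    Complex.reCLM.hasFDerivAt.comp_hasDerivAt x (hy1 x hx)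
  have hψd : ∀ x ∈ Set.Icc a b, HasDerivAt (fun t => (y t).im) (deriv y x).im x := fun x hx =>
    Complex.imCLM.hasFDerivAt.comp_hasDerivAt x (hy1 x hx)
  set W : ℝ → ℝ := fun x => (deriv y x).re * (y x).im - (y x).re * (deriv y x).im with hWdef
  have hWd : ∀ x ∈ Set.Icc a b, HasDerivAt W (lam.im * (r x * ‖y x‖ ^ 2)) x := by
    intro x hx
    have h1 := (Complex.reCLM.hasFDerivAt.comp_hasDerivAt x (hy2 x hx)).mul (hψd x hx)
    have h2 := (hφd x hx).mul (Complex.imCLM.hasFDerivAt.comp_hasDerivAt x (hy2 x hx))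
    have h3 := h1.sub h2
    refine HasDerivAt.congr_deriv (f := W) h3 ?_
    have hc : deriv (deriv y) x = (q x : ℂ) * y x - lam * (r x : ℂ) * y x := by
      linear_combination -(hode x hx)
    simp only [hc, Complex.sub_re, Complex.sub_im, Complex.mul_re, Complex.mul_im,
      Complex.ofReal_re, Complex.ofReal_im, Complex.sq_norm,
      Complex.normSq_apply, Complex.reCLM_apply, Complex.imCLM_apply, Function.comp_apply]
    ring
  have hcontd : ContinuousOn (fun t => lam.im * (r t * ‖y t‖ ^ 2)) (Set.Icc a b) :=
    continuousOn_const.mul (hr.mul ((hycont.norm).pow 2))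
  have hWa : W a = 0 := by simp [hWdef, hya]
  have hWeq : ∀ x ∈ Set.Icc a b, W x = lam.im * G x := by
    intro x hx
    have huIcc : Set.uIcc a x ⊆ Set.Icc a b := by
      rw [Set.uIcc_of_le hx.1]; exact Set.Icc_subset_Icc le_rfl hx.2
    have hint : IntervalIntegrable (fun t => lam.im * (r t * ‖y t‖ ^ 2))
        MeasureTheory.volume a x := (hcontd.mono huIcc).intervalIntegrable
    have hftc := intervalIntegral.integral_eq_sub_of_hasDerivAt
      (fun t ht => hWd t (huIcc ht)) hint
    rw [intervalIntegral.integral_const_mul, hWa, sub_zero] at hftc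
    rw [hG x, ← hftc]
  have hWpos : ∀ x ∈ Set.Icc x₁ x₂, 0 < W x := by
    intro x hx
    rw [hWeq x (hsub hx)]
    exact mul_pos hlam (hGpos x hx)
  -- the quotient φ/ψ
  set h : ℝ → ℝ := fun t => (y t).re / (y t).im with hhdef
  have hcont : ContinuousOn h (Set.Icc x₁ x₂) := by
    apply ContinuousOn.div
    · exact Complex.continuous_re.comp_continuousOn (hycont.mono hsub)
    · exact Complex.continuous_im.comp_continuousOn (hycont.mono hsub)
    · exact fun x hx => (hψpos x hx).ne'
  have hmono : StrictMonoOn h (Set.Icc x₁ x₂) := by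
    apply strictMonoOn_of_deriv_pos (convex_Icc x₁ x₂) hcont
    intro x hx
    rw [interior_Icc] at hx
    have hxmem : x ∈ Set.Icc x₁ x₂ := ⟨hx.1.le, hx.2.le⟩
    have hne : (y x).im ≠ 0 := (hψpos x hxmem).ne'
    have hd : HasDerivAt h (W x / (y x).im ^ 2) x :=
      (hφd x (hsub hxmem)).div (hψd x (hsub hxmem)) hne
    rw [hd.deriv]
    exact div_pos (hWpos x hxmem) (pow_pos (hψpos x hxmem) 2)
  have h12 := hmono (Set.left_mem_Icc.mpr hlt.le) (Set.right_mem_Icc.mpr hlt.le) hlt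
  rw [hhdef] at h12
  simp only [hφ₁, hφ₂, zero_div] at h12
  exact lt_irrefl 0 h12
end

section
/- Let y = φ + iψ solve -y'' + q y = λ r y on [a,b] with y(a) = 0, Im λ > 0, and suppose G(x) = ∫_a^x r|y|² dt < 0 on (a,b). If φ'(a) > 0, x₀ ∈ (a,b) is the smallest zero of φ (so φ > 0 on (a,x₀)), then ψ(x₀) > 0. -/
theorem stmt_11 (a b : ℝ) (hab : a < b) (q r : ℝ → ℝ) (lam : ℂ) (hlam : 0 < lam.im)
    (hq : ContinuousOn q (Set.Icc a b)) (hr : ContinuousOn r (Set.Icc a b))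
    (y : ℝ → ℂ) (φ ψ : ℝ → ℝ)
    (hφ : ∀ x, φ x = (y x).re) (hψ : ∀ x, ψ x = (y x).im)
    (hsmooth : ∀ x ∈ Set.Icc a b, ContDiffAt ℝ 2 y x)
    (hode : ∀ x ∈ Set.Icc a b,
      -(deriv (deriv y) x) + (q x : ℂ) * y x = lam * (r x : ℂ) * y x)
    (hya : y a = 0)
    (G : ℝ → ℝ) (hG : ∀ x, G x = ∫ t in a..x, r t * ‖y t‖ ^ 2)
    (hGneg : ∀ x ∈ Set.Ioo a b, G x < 0)
    (hφ'a : 0 < deriv φ a)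
    (x₀ : ℝ) (hx₀ : x₀ ∈ Set.Ioo a b) (hφx₀ : φ x₀ = 0)
    (hmin : ∀ x ∈ Set.Ioo a x₀, φ x ≠ 0)
    (hφpos : ∀ x ∈ Set.Ioo a x₀, 0 < φ x) :
    0 < ψ x₀ := by
  have hx₀I : x₀ ∈ Set.Icc a b := ⟨hx₀.1.le, hx₀.2.le⟩
  have hsub : Set.Icc a x₀ ⊆ Set.Icc a b := Set.Icc_subset_Icc le_rfl hx₀.2.le
  -- basic differentiability facts
  have key : ∀ x ∈ Set.Icc a b,
      DifferentiableAt ℝ y x ∧ HasDerivAt (deriv y) (deriv (deriv y) x) x := by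
    intro x hx
    obtain ⟨u, hu, hcd⟩ := (hsmooth x hx).contDiffOn le_rfl (by simp)
    have hxv : x ∈ interior u := mem_interior_iff_mem_nhds.2 hu
    have hcd' : ContDiffOn ℝ 2 y (interior u) := hcd.mono interior_subset
    have h1 : DifferentiableAt ℝ y x :=
      (hcd'.differentiableOn (by norm_num)).differentiableAt
        (isOpen_interior.mem_nhds hxv)
    have h2 : ContDiffOn ℝ 1 (deriv y) (interior u) :=
      hcd'.deriv_of_isOpen isOpen_interior (by norm_num)
    exact ⟨h1, ((h2.differentiableOn (by norm_num)).differentiableAt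
      (isOpen_interior.mem_nhds hxv)).hasDerivAt⟩
  -- the Wronskian-type function
  set W : ℝ → ℝ :=
    fun x => (deriv y x).re * (y x).im - (y x).re * (deriv y x).im with hWdef
  have hW : ∀ x ∈ Set.Icc a b,
      HasDerivAt W (lam.im * (r x * ‖y x‖ ^ 2)) x := by
    intro x hx
    obtain ⟨h1, h2⟩ := key x hx
    have hy' : HasDerivAt y (deriv y x) x := h1.hasDerivAt
    have hd2 : deriv (deriv y) x = (q x : ℂ) * y x - lam * (r x : ℂ) * y x := by
      have := hode x hx; linear_combination -this
    have hre1 : HasDerivAt (fun t => (deriv y t).re) ((deriv (deriv y) x).re) x :=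
      Complex.reCLM.hasFDerivAt.comp_hasDerivAt x h2
    have him1 : HasDerivAt (fun t => (deriv y t).im) ((deriv (deriv y) x).im) x :=
      Complex.imCLM.hasFDerivAt.comp_hasDerivAt x h2
    have hre0 : HasDerivAt (fun t => (y t).re) ((deriv y x).re) x :=
      Complex.reCLM.hasFDerivAt.comp_hasDerivAt x hy'
    have him0 : HasDerivAt (fun t => (y t).im) ((deriv y x).im) x :=
      Complex.imCLM.hasFDerivAt.comp_hasDerivAt x hy'
    have hprod := (hre1.mul him0).sub (hre0.mul him1)
    convert hprod using 1
    iterate 3 rfl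
    rw [hd2]
    have hnorm : ‖y x‖ ^ 2 = (y x).re ^ 2 + (y x).im ^ 2 := by
      rw [Complex.sq_norm, Complex.normSq_apply]; ring
    simp only [Complex.sub_re, Complex.sub_im, Complex.mul_re, Complex.mul_im,
      Complex.ofReal_re, Complex.ofReal_im, hnorm]
    ring
  -- continuity and integrability
  have hycont : ContinuousOn y (Set.Icc a b) := fun x hx =>
    ((hsmooth x hx).continuousAt).continuousWithinAt
  have hgint : IntervalIntegrable (fun t => lam.im * (r t * ‖y t‖ ^ 2))
      MeasureTheory.volume a x₀ := by
    apply ContinuousOn.intervalIntegrable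
    rw [Set.uIcc_of_le hx₀.1.le]
    exact continuousOn_const.mul ((hr.mono hsub).mul
      (((hycont.mono hsub).norm).pow 2))
  have hFTC : (∫ t in a..x₀, lam.im * (r t * ‖y t‖ ^ 2)) = W x₀ - W a := by
    apply intervalIntegral.integral_eq_sub_of_hasDerivAt
    · intro t ht
      rw [Set.uIcc_of_le hx₀.1.le] at ht
      exact hW t (hsub ht)
    · exact hgint
  have hWa : W a = 0 := by simp [hWdef, hya]
  have hWx₀ : W x₀ = lam.im * G x₀ := by
    have : (∫ t in a..x₀, lam.im * (r t * ‖y t‖ ^ 2))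
        = lam.im * ∫ t in a..x₀, r t * ‖y t‖ ^ 2 := by
      rw [intervalIntegral.integral_const_mul]
    rw [hG, ← this, hFTC, hWa, sub_zero]
  have hWneg : W x₀ < 0 := by
    rw [hWx₀]
    exact mul_neg_of_pos_of_neg hlam (hGneg x₀ hx₀)
  -- W x₀ = φ'(x₀) * ψ(x₀)
  have hyre : (y x₀).re = 0 := by rw [← hφ]; exact hφx₀
  have hφd : HasDerivAt φ ((deriv y x₀).re) x₀ := by
    have : HasDerivAt (fun t => (y t).re) ((deriv y x₀).re) x₀ :=
      Complex.reCLM.hasFDerivAt.comp_hasDerivAt x₀ (key x₀ hx₀I).1.hasDerivAt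
    have hfe : φ = fun t => (y t).re := funext hφ
    rw [hfe]; exact this
  -- φ'(x₀) ≤ 0 since φ > 0 on (a, x₀) and φ(x₀) = 0
  have hcle : (deriv y x₀).re ≤ 0 := by
    have hw : HasDerivWithinAt φ ((deriv y x₀).re) (Set.Iio x₀) x₀ :=
      hφd.hasDerivWithinAt
    rw [hasDerivWithinAt_iff_tendsto_slope] at hw
    have hdiff : Set.Iio x₀ \ {x₀} = Set.Iio x₀ := by
      apply Set.diff_singleton_eq_self; simp
    rw [hdiff] at hw
    refine le_of_tendsto hw ?_
    filter_upwards [Ioo_mem_nhdsLT_of_mem (Set.mem_Ioc.2 ⟨hx₀.1, le_rfl⟩)] with t ht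
    have h1 : 0 < φ t := hφpos t ht
    have h2 : t - x₀ < 0 := sub_neg.2 ht.2
    rw [slope_def_field, hφx₀]
    rw [div_nonpos_iff]
    left
    exact ⟨by linarith, by linarith⟩
  have hWval : W x₀ = (deriv y x₀).re * ψ x₀ := by
    simp [hWdef, hyre, hψ x₀]
  nlinarith [hWneg, hWval.symm ▸ hWneg, hcle]
end

section
/- Under the assumptions: y = φ + iψ solves -y'' + q y = λ r y on [a,b] with y(a)=0, Im λ > 0, G(x) = ∫_a^x r|y|² dt < 0 on (a,b), φ'(a) > 0, x₀ ∈ (a,b) the smallest zero of φ, and ψ'(a) > 0: then ψ(x) > 0 for all x ∈ (a, x₀]. -/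
open Set Filter Topology intervalIntegral

theorem stmt_12 (a b : ℝ) (hab : a < b) (q r : ℝ → ℝ) (lam : ℂ) (hlam : 0 < lam.im)
    (hq : ContinuousOn q (Set.Icc a b)) (hr : ContinuousOn r (Set.Icc a b))
    (y : ℝ → ℂ) (φ ψ : ℝ → ℝ)
    (hφ : ∀ x, φ x = (y x).re) (hψ : ∀ x, ψ x = (y x).im)
    (hsmooth : ∀ x ∈ Set.Icc a b, ContDiffAt ℝ 2 y x)
    (hode : ∀ x ∈ Set.Icc a b,
      -(deriv (deriv y) x) + (q x : ℂ) * y x = lam * (r x : ℂ) * y x)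
    (hya : y a = 0)
    (G : ℝ → ℝ) (hG : ∀ x, G x = ∫ t in a..x, r t * ‖y t‖ ^ 2)
    (hGneg : ∀ x ∈ Set.Ioo a b, G x < 0)
    (hφ'a : 0 < deriv φ a)
    (x₀ : ℝ) (hx₀ : x₀ ∈ Set.Ioo a b) (hφx₀ : φ x₀ = 0)
    (hmin : ∀ x ∈ Set.Ioo a x₀, φ x ≠ 0)
    (hφpos : ∀ x ∈ Set.Ioo a x₀, 0 < φ x)
    (hψ'a : 0 < deriv ψ a) :
    ∀ x ∈ Set.Ioc a x₀, 0 < ψ x := by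
  have hax0 : a < x₀ := hx₀.1
  have hx0b : x₀ < b := hx₀.2
  have haIcc : a ∈ Set.Icc a b := ⟨le_rfl, hab.le⟩
  have hydiff : ∀ x ∈ Set.Icc a b, DifferentiableAt ℝ y x :=
    fun x hx => (hsmooth x hx).differentiableAt two_ne_zero
  have hy'diff : ∀ x ∈ Set.Icc a b, DifferentiableAt ℝ (deriv y) x := by
    intro x hx
    have h1 : ContDiffAt ℝ 1 (fderiv ℝ y) x := (hsmooth x hx).fderiv_right (by norm_num)
    exact (h1.differentiableAt one_ne_zero).clm_apply (differentiableAt_const _)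
  -- the Wronskian
  set W : ℝ → ℝ := fun t => (deriv y t).re * (y t).im - (y t).re * (deriv y t).im with hWdef
  have hnormsq : ∀ z : ℂ, ‖z‖ ^ 2 = z.re ^ 2 + z.im ^ 2 := by
    intro z
    rw [Complex.sq_norm, Complex.normSq_apply]; ring
  have hWderiv : ∀ x ∈ Set.Icc a b, HasDerivAt W (lam.im * (r x * ‖y x‖ ^ 2)) x := by
    intro x hx
    have hy : HasDerivAt y (deriv y x) x := (hydiff x hx).hasDerivAt
    have hy' : HasDerivAt (deriv y) (deriv (deriv y) x) x := (hy'diff x hx).hasDerivAt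
    have h1 : HasDerivAt (fun t => (y t).re) (deriv y x).re x :=
      Complex.reCLM.hasFDerivAt.comp_hasDerivAt x hy
    have h2 : HasDerivAt (fun t => (y t).im) (deriv y x).im x :=
      Complex.imCLM.hasFDerivAt.comp_hasDerivAt x hy
    have h3 : HasDerivAt (fun t => (deriv y t).re) (deriv (deriv y) x).re x :=
      Complex.reCLM.hasFDerivAt.comp_hasDerivAt x hy'
    have h4 : HasDerivAt (fun t => (deriv y t).im) (deriv (deriv y) x).im x :=
      Complex.imCLM.hasFDerivAt.comp_hasDerivAt x hy'
    have hD := (h3.mul h2).sub (h1.mul h4)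
    have hy'' : deriv (deriv y) x = (q x : ℂ) * y x - lam * (r x : ℂ) * y x := by
      have := hode x hx; linear_combination -this
    refine hD.congr_deriv ?_
    rw [hy'', hnormsq]
    simp only [Complex.sub_re, Complex.sub_im, Complex.mul_re, Complex.mul_im,
      Complex.ofReal_re, Complex.ofReal_im]
    ring
  have hycont : ContinuousOn y (Set.Icc a b) :=
    fun t ht => ((hsmooth t ht).continuousAt).continuousWithinAt
  have hWeq : ∀ x ∈ Set.Icc a b, W x = lam.im * G x := by
    intro x hx
    have hsub : Set.uIcc a x ⊆ Set.Icc a b := by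
      rw [Set.uIcc_of_le hx.1]; exact Set.Icc_subset_Icc le_rfl hx.2
    have hcont : ContinuousOn (fun t => lam.im * (r t * ‖y t‖ ^ 2)) (Set.uIcc a x) :=
      continuousOn_const.mul ((hr.mono hsub).mul (((hycont.mono hsub).norm).pow 2))
    have hint := intervalIntegral.integral_eq_sub_of_hasDerivAt
      (fun t ht => hWderiv t (hsub ht)) hcont.intervalIntegrable
    have hWa : W a = 0 := by simp [hWdef, hya]
    have hmul : (∫ t in a..x, lam.im * (r t * ‖y t‖ ^ 2))
        = lam.im * ∫ t in a..x, r t * ‖y t‖ ^ 2 :=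
      intervalIntegral.integral_const_mul _ _
    rw [hG x, ← hmul, hint, hWa, sub_zero]
  have hψD : ∀ x ∈ Set.Icc a b, HasDerivAt ψ ((deriv y x).im) x := by
    intro x hx
    have : HasDerivAt (fun t => (y t).im) ((deriv y x).im) x :=
      Complex.imCLM.hasFDerivAt.comp_hasDerivAt x (hydiff x hx).hasDerivAt
    have hψe : ψ = fun t => (y t).im := funext hψ
    rw [hψe]; exact this
  have hψa : ψ a = 0 := by rw [hψ, hya]; rfl
  -- ψ > 0 just to the right of a
  have hda : HasDerivAt ψ (deriv ψ a) a := by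
    have h := hψD a haIcc; rwa [h.deriv]
  have hslope : Tendsto (slope ψ a) (𝓝[≠] a) (𝓝 (deriv ψ a)) :=
    hasDerivAt_iff_tendsto_slope.mp hda
  have hev : ∀ᶠ t in 𝓝[>] a, 0 < slope ψ a t := by
    have h1 : (𝓝[>] a : Filter ℝ) ≤ 𝓝[≠] a :=
      nhdsWithin_mono a (fun t ht => ne_of_gt ht)
    exact (hslope.mono_left h1).eventually (eventually_gt_nhds hψ'a)
  obtain ⟨u, hu, husub⟩ := mem_nhdsGT_iff_exists_Ioo_subset.mp hev
  have hupos : ∀ t ∈ Set.Ioo a u, 0 < ψ t := by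
    intro t ht
    have h := husub ht
    rw [Set.mem_setOf_eq, slope_def_field, hψa, sub_zero] at h
    rcases div_pos_iff.mp h with ⟨h1, _⟩ | ⟨_, h2⟩
    · exact h1
    · linarith [ht.1]
  have hu_a : a < u := by
    rcases Set.nonempty_Ioo.mpr (lt_of_lt_of_le (lt_min hax0 hab) (le_refl _)) with _
    by_contra hc
    push_neg at hc
    have : Set.Ioo a u = ∅ := Set.Ioo_eq_empty (by linarith)
    have := husub
    -- fall back: u ∈ 𝓝[>] means Ioo a u ∈ ... need a < u; derive from hu
    exact absurd hu (by simpa [Set.mem_Ioi] using not_lt.mpr hc)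
  -- main contradiction argument
  intro x hx
  by_contra hcon
  push_neg at hcon
  have hax : a < x := hx.1
  have hxx0 : x ≤ x₀ := hx.2
  have hxb : x < b := lt_of_le_of_lt hxx0 hx0b
  -- choose c ∈ (a, min u x] with ψ > 0 on (a, c]
  set c : ℝ := (a + min u x) / 2 with hc
  have hminux : a < min u x := lt_min hu_a hax
  have hac : a < c := by simp only [hc]; linarith
  have hcu : c < u := by
    have : c < min u x := by simp only [hc]; linarith
    exact lt_of_lt_of_le this (min_le_left _ _)
  have hcx : c < x := by
    have : c < min u x := by simp only [hc]; linarith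
    exact lt_of_lt_of_le this (min_le_right _ _)
  have hcpos : ∀ t ∈ Set.Ioc a c, 0 < ψ t :=
    fun t ht => hupos t ⟨ht.1, lt_of_le_of_lt ht.2 hcu⟩
  -- least zero of ψ in [c, x]
  set T : Set ℝ := Set.Icc c x ∩ ψ ⁻¹' Set.Iic 0 with hT
  have hψcont : ContinuousOn ψ (Set.Icc a b) := by
    have hψe : ψ = fun t => (y t).im := funext hψ
    rw [hψe]; exact Complex.continuous_im.comp_continuousOn hycont
  have hIccsub : Set.Icc c x ⊆ Set.Icc a b :=
    Set.Icc_subset_Icc hac.le hxb.le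
  have hTclosed : IsClosed T := by
    apply ContinuousOn.preimage_isClosed_of_isClosed (hψcont.mono hIccsub)
      isClosed_Icc isClosed_Iic
  have hTne : T.Nonempty := ⟨x, ⟨hcx.le, le_rfl⟩, hcon⟩
  have hTbdd : BddBelow T := ⟨c, fun t ht => ht.1.1⟩
  set x₁ : ℝ := sInf T with hx₁def
  have hx₁T : x₁ ∈ T := hTclosed.csInf_mem hTne hTbdd
  have hcx₁ : c ≤ x₁ := hx₁T.1.1
  have hx₁x : x₁ ≤ x := hx₁T.1.2
  have hax₁ : a < x₁ := lt_of_lt_of_le hac hcx₁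
  have hx₁x₀ : x₁ ≤ x₀ := le_trans hx₁x hxx0
  have hx₁Icc : x₁ ∈ Set.Icc a b := ⟨hax₁.le, (lt_of_le_of_lt hx₁x₀ hx0b).le⟩
  have hx₁Ioo : x₁ ∈ Set.Ioo a b := ⟨hax₁, lt_of_le_of_lt hx₁x₀ hx0b⟩
  -- ψ > 0 on (a, x₁)
  have hpos : ∀ t ∈ Set.Ioo a x₁, 0 < ψ t := by
    intro t ht
    by_cases htc : t ≤ c
    · exact hcpos t ⟨ht.1, htc⟩
    · push_neg at htc
      by_contra hneg
      push_neg at hneg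
      have htT : t ∈ T := ⟨⟨htc.le, le_trans ht.2.le hx₁x⟩, hneg⟩
      have := csInf_le hTbdd htT
      exact absurd this (not_le.mpr ht.2)
  -- ψ x₁ = 0
  have hψx₁le : ψ x₁ ≤ 0 := hx₁T.2
  have hψx₁ : ψ x₁ = 0 := by
    refine le_antisymm hψx₁le ?_
    have hct : ContinuousAt ψ x₁ := by
      have hψe : ψ = fun t => (y t).im := funext hψ
      rw [hψe]
      exact Complex.continuous_im.continuousAt.comp (hsmooth x₁ hx₁Icc).continuousAt
    have htend : Tendsto ψ (𝓝[<] x₁) (𝓝 (ψ x₁)) :=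
      hct.continuousWithinAt.tendsto
    refine ge_of_tendsto htend ?_
    filter_upwards [Ioo_mem_nhdsLT_of_mem ⟨hax₁, le_rfl⟩] with t ht
    exact (hpos t ht).le
  -- Wronskian at x₁
  have hyim : (y x₁).im = 0 := by rw [← hψ]; exact hψx₁
  have hWx₁ : W x₁ = lam.im * G x₁ := hWeq x₁ hx₁Icc
  have hWneg : W x₁ < 0 := by
    rw [hWx₁]; exact mul_neg_of_pos_of_neg hlam (hGneg x₁ hx₁Ioo)
  have hWval : W x₁ = -(φ x₁ * (deriv y x₁).im) := by
    simp only [hWdef, hyim, mul_zero, zero_sub, ← hφ x₁]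
  have hprod : 0 < φ x₁ * (deriv y x₁).im := by
    rw [hWval] at hWneg; linarith
  rcases eq_or_lt_of_le hx₁x₀ with heq | hlt
  · -- x₁ = x₀ : φ x₁ = 0, contradiction
    rw [heq, hφx₀] at hprod
    simp at hprod
  · -- x₁ < x₀ : φ x₁ > 0 so ψ'(x₁) > 0, contradicting ψ > 0 on left, ψ x₁ = 0
    have hφx₁ : 0 < φ x₁ := hφpos x₁ ⟨hax₁, hlt⟩
    have hd : 0 < (deriv y x₁).im := by
      by_contra hdle
      push_neg at hdle
      nlinarith
    have hdx₁ : HasDerivAt ψ ((deriv y x₁).im) x₁ := hψD x₁ hx₁Icc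
    have hslope₁ : Tendsto (slope ψ x₁) (𝓝[≠] x₁) (𝓝 ((deriv y x₁).im)) :=
      hasDerivAt_iff_tendsto_slope.mp hdx₁
    have h1 : (𝓝[<] x₁ : Filter ℝ) ≤ 𝓝[≠] x₁ :=
      nhdsWithin_mono x₁ (fun t ht => ne_of_lt ht)
    have hev₁ : ∀ᶠ t in 𝓝[<] x₁, 0 < slope ψ x₁ t :=
      (hslope₁.mono_left h1).eventually (eventually_gt_nhds hd)
    have hev₂ : ∀ᶠ t in 𝓝[<] x₁, t ∈ Set.Ioo a x₁ :=
      Ioo_mem_nhdsLT_of_mem ⟨hax₁, le_rfl⟩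
    obtain ⟨t, hts, htI⟩ := (hev₁.and hev₂).exists
    rw [slope_def_field, hψx₁, sub_zero] at hts
    have hnum : 0 < ψ t := hpos t htI
    have hden : t - x₁ < 0 := by linarith [htI.2]
    have : ψ t / (t - x₁) < 0 := div_neg_of_pos_of_neg hnum hden
    linarith
end

section
/- Under the assumptions: y = φ + iψ solves -y'' + q y = λ r y on [a,b] with y(a)=0, Im λ > 0, G(x) = ∫_a^x r|y|² dt > 0 on (a,b), ψ'(a) < 0 (so ψ < 0 on (a, x₂) where x₂ is ψ's least zero in (a,b)), and φ'(a) < 0: then φ(x) < 0 for all x ∈ (a, x₂). -/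
open Set Filter MeasureTheory intervalIntegral

theorem stmt_13 (a b : ℝ) (hab : a < b) (q r : ℝ → ℝ) (lam : ℂ) (hlam : 0 < lam.im)
    (hq : ContinuousOn q (Set.Icc a b)) (hr : ContinuousOn r (Set.Icc a b))
    (y : ℝ → ℂ) (φ ψ : ℝ → ℝ)
    (hφ : ∀ x, φ x = (y x).re) (hψ : ∀ x, ψ x = (y x).im)
    (hsmooth : ∀ x ∈ Set.Icc a b, ContDiffAt ℝ 2 y x)
    (hode : ∀ x ∈ Set.Icc a b,
      -(deriv (deriv y) x) + (q x : ℂ) * y x = lam * (r x : ℂ) * y x)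
    (hya : y a = 0)
    (G : ℝ → ℝ) (hG : ∀ x, G x = ∫ t in a..x, r t * ‖y t‖ ^ 2)
    (hGpos : ∀ x ∈ Set.Ioo a b, 0 < G x)
    (hψ'a : deriv ψ a < 0)
    (x₂ : ℝ) (hx₂ : x₂ ∈ Set.Ioo a b) (hψx₂ : ψ x₂ = 0)
    (hmin : ∀ x ∈ Set.Ioo a x₂, ψ x ≠ 0)
    (hψneg : ∀ x ∈ Set.Ioo a x₂, ψ x < 0)
    (hφ'a : deriv φ a < 0) :
    ∀ x ∈ Set.Ioo a x₂, φ x < 0 := by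
  obtain ⟨hax₂, hx₂b⟩ := hx₂
  have hφfun : φ = fun t => (y t).re := funext hφ
  have hψfun : ψ = fun t => (y t).im := funext hψ
  -- derivative facts
  have key : ∀ x ∈ Set.Icc a b,
      HasDerivAt φ ((deriv y x).re) x ∧ HasDerivAt ψ ((deriv y x).im) x ∧
      HasDerivAt (deriv φ) ((deriv (deriv y) x).re) x ∧
      HasDerivAt (deriv ψ) ((deriv (deriv y) x).im) x := by
    intro x hx
    obtain ⟨u, hu, hcd⟩ := (hsmooth x hx).contDiffOn le_rfl (by simp)
    set v := interior u with hv
    have hxv : x ∈ v := mem_interior_iff_mem_nhds.mpr hu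
    have hov : IsOpen v := isOpen_interior
    have hcdv : ContDiffOn ℝ 2 y v := hcd.mono interior_subset
    have hdy : ∀ t ∈ v, DifferentiableAt ℝ y t := fun t ht =>
      ((hcdv t ht).contDiffAt (hov.mem_nhds ht)).differentiableAt (by norm_num)
    have hdy2 : DifferentiableAt ℝ (deriv y) x := by
      have h1 : ContDiffOn ℝ 1 (deriv y) v := hcdv.deriv_of_isOpen hov (by norm_num)
      exact ((h1 x hxv).contDiffAt (hov.mem_nhds hxv)).differentiableAt (by norm_num)
    have hre : ∀ t, DifferentiableAt ℝ y t →
        HasDerivAt (fun s => (y s).re) ((deriv y t).re) t := fun t h =>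
      Complex.reCLM.hasFDerivAt.comp_hasDerivAt t h.hasDerivAt
    have him : ∀ t, DifferentiableAt ℝ y t →
        HasDerivAt (fun s => (y s).im) ((deriv y t).im) t := fun t h =>
      Complex.imCLM.hasFDerivAt.comp_hasDerivAt t h.hasDerivAt
    have hevre : deriv φ =ᶠ[nhds x] fun t => (deriv y t).re := by
      filter_upwards [hov.mem_nhds hxv] with t ht
      rw [hφfun]; exact (hre t (hdy t ht)).deriv
    have hevim : deriv ψ =ᶠ[nhds x] fun t => (deriv y t).im := by
      filter_upwards [hov.mem_nhds hxv] with t ht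
      rw [hψfun]; exact (him t (hdy t ht)).deriv
    refine ⟨hφfun ▸ hre x (hdy x hxv), hψfun ▸ him x (hdy x hxv), ?_, ?_⟩
    · exact (Complex.reCLM.hasFDerivAt.comp_hasDerivAt x hdy2.hasDerivAt).congr_of_eventuallyEq
        hevre
    · exact (Complex.imCLM.hasFDerivAt.comp_hasDerivAt x hdy2.hasDerivAt).congr_of_eventuallyEq
        hevim
  have hycont : ContinuousOn y (Set.Icc a b) := fun t ht =>
    ((hsmooth t ht).continuousAt).continuousWithinAt
  -- globally continuous replacement of r‖y‖²
  set π : ℝ → ℝ := fun t => max a (min t b) with hπ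
  have hπcont : Continuous π := continuous_const.max (continuous_id.min continuous_const)
  have hπmem : ∀ t, π t ∈ Set.Icc a b := fun t =>
    ⟨le_max_left _ _, max_le hab.le (min_le_right _ _)⟩
  have hπid : ∀ t ∈ Set.Icc a b, π t = t := fun t ht => by
    simp [hπ, min_eq_left ht.2, max_eq_right ht.1]
  set g : ℝ → ℝ := fun t => r (π t) * ‖y (π t)‖ ^ 2 with hg
  have hgcont : Continuous g := by
    have h1 : Continuous fun t => r (π t) := hr.comp_continuous hπcont hπmem
    have h2 : Continuous fun t => y (π t) := hycont.comp_continuous hπcont hπmem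
    exact h1.mul (h2.norm.pow 2)
  set G₀ : ℝ → ℝ := fun x => ∫ t in a..x, g t with hG₀
  have hGeq : ∀ x ∈ Set.Icc a b, G x = G₀ x := by
    intro x hx
    rw [hG x, hG₀]
    apply intervalIntegral.integral_congr
    intro t ht
    have htm : t ∈ Set.Icc a b := by
      rw [uIcc_of_le hx.1] at ht
      exact ⟨ht.1, ht.2.trans hx.2⟩
    rw [hg]; simp only [hπid t htm]
  have hG₀deriv : ∀ x, HasDerivAt G₀ (g x) x := fun x =>
    integral_hasDerivAt_right (hgcont.intervalIntegrable _ _)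
      (hgcont.stronglyMeasurableAtFilter _ _) hgcont.continuousAt
  -- the Wronskian-type function
  set W : ℝ → ℝ := fun t => deriv φ t * ψ t - φ t * deriv ψ t with hWdef
  have hWderiv : ∀ x ∈ Set.Icc a b, HasDerivAt W (lam.im * g x) x := by
    intro x hx
    obtain ⟨h1, h2, h3, h4⟩ := key x hx
    have hW : HasDerivAt W
        ((deriv (deriv y) x).re * ψ x + deriv φ x * (deriv y x).im -
          ((deriv y x).re * deriv ψ x + φ x * (deriv (deriv y) x).im)) x :=
      (h3.mul h2).sub (h1.mul h4)
    convert hW using 1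
    have hY'' : deriv (deriv y) x = (q x : ℂ) * y x - lam * (r x : ℂ) * y x := by
      have := hode x hx; linear_combination -this
    rw [h1.deriv, h2.deriv, hφ x, hψ x, hY'']
    have hgx : g x = r x * ‖y x‖ ^ 2 := by simp only [hg]; rw [hπid x hx]
    rw [hgx]
    have hnorm : ‖y x‖ ^ 2 = (y x).re ^ 2 + (y x).im ^ 2 := by
      rw [Complex.sq_norm, Complex.normSq_apply]; ring
    simp only [Complex.sub_re, Complex.sub_im, Complex.mul_re, Complex.mul_im,
      Complex.ofReal_re, Complex.ofReal_im, hnorm]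
    ring
  -- W = Im λ · G₀ on [a,b]
  have hWa : W a = 0 := by
    rw [hWdef]; simp only [hφ a, hψ a, hya]; simp
  have hWeq : ∀ x ∈ Set.Icc a b, W x = lam.im * G₀ x := by
    have hconst : ∀ x ∈ Set.Icc a b,
        (fun t => W t - lam.im * G₀ t) x = (fun t => W t - lam.im * G₀ t) a := by
      apply constant_of_has_deriv_right_zero
      · intro t ht
        exact ((hWderiv t ht).sub ((hG₀deriv t).const_mul lam.im)).continuousAt.continuousWithinAt
      · intro t ht
        have := (hWderiv t (Set.mem_Icc_of_Ico ht)).sub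
          ((hG₀deriv t).const_mul lam.im)
        rw [sub_self] at this; exact this.hasDerivWithinAt
    intro x hx
    have := hconst x hx
    simp only at this
    have hG₀a : G₀ a = 0 := by rw [hG₀]; simp
    rw [hWa, hG₀a] at this
    linarith
  have hWpos : ∀ x ∈ Set.Ioo a b, 0 < W x := by
    intro x hx
    rw [hWeq x ⟨hx.1.le, hx.2.le⟩, ← hGeq x ⟨hx.1.le, hx.2.le⟩]
    exact mul_pos hlam (hGpos x hx)
  -- φ is negative just to the right of a
  have hφa : φ a = 0 := by rw [hφ a, hya]; rfl
  have hφcont : ContinuousOn φ (Set.Icc a b) := by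
    rw [hφfun]; exact Complex.continuous_re.comp_continuousOn hycont
  have hφderivA : HasDerivAt φ (deriv φ a) a := by
    have h := (key a ⟨le_rfl, hab.le⟩).1
    rw [h.deriv]; exact h
  have hslopeA : Tendsto (slope φ a) (nhdsWithin a {a}ᶜ) (nhds (deriv φ a)) :=
    hasDerivAt_iff_tendsto_slope.mp hφderivA
  have hnegnear : ∀ᶠ t in nhdsWithin a (Set.Ioi a), φ t < 0 := by
    have h1 : Tendsto (slope φ a) (nhdsWithin a (Set.Ioi a)) (nhds (deriv φ a)) :=
      hslopeA.mono_left (nhdsWithin_mono _ (fun t ht => ne_of_gt ht))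
    have h2 : ∀ᶠ t in nhdsWithin a (Set.Ioi a), slope φ a t < 0 :=
      h1.eventually_lt_const hφ'a
    filter_upwards [h2, self_mem_nhdsWithin] with t ht hta
    have : slope φ a t = φ t / (t - a) := by
      rw [slope_def_field, hφa]; ring
    rw [this] at ht
    have h3 : 0 < t - a := sub_pos.mpr hta
    by_contra hc
    push_neg at hc
    exact absurd (div_nonneg hc h3.le) (not_le.mpr ht)
  obtain ⟨δ, hδa, hδsub⟩ := mem_nhdsGT_iff_exists_Ioo_subset.mp hnegnear
  -- main argument by contradiction
  intro x₀ hx₀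
  by_contra hc
  push_neg at hc
  obtain ⟨c, hc1, hc2⟩ := exists_between (lt_min hδa hx₀.1)
  have hcδ : c < δ := hc2.trans_le (min_le_left _ _)
  have hcx₀ : c < x₀ := hc2.trans_le (min_le_right _ _)
  have hφc : φ c < 0 := hδsub ⟨hc1, hcδ⟩
  have hsub : Set.Icc c x₀ ⊆ Set.Icc a b :=
    Set.Icc_subset_Icc hc1.le (hx₀.2.le.trans hx₂b.le)
  -- the least zero z of φ in [c, x₀]
  set Z : Set ℝ := Set.Icc c x₀ ∩ φ ⁻¹' {0} with hZ
  have hZclosed : IsClosed Z :=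
    (hφcont.mono hsub).preimage_isClosed_of_isClosed isClosed_Icc isClosed_singleton
  have hZne : Z.Nonempty := by
    have : (0 : ℝ) ∈ Set.Icc (φ c) (φ x₀) := ⟨hφc.le, hc⟩
    obtain ⟨w, hw, hw0⟩ := intermediate_value_Icc hcx₀.le (hφcont.mono hsub) this
    exact ⟨w, hw, hw0⟩
  have hZbdd : BddBelow Z := ⟨c, fun t ht => ht.1.1⟩
  set z := sInf Z with hz
  have hzZ : z ∈ Z := hZclosed.csInf_mem hZne hZbdd
  have hφz : φ z = 0 := hzZ.2
  have hcz : c < z := lt_of_le_of_ne hzZ.1.1 (fun h => absurd hφz (h ▸ hφc).ne)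
  have hzx₂ : z ∈ Set.Ioo a x₂ := ⟨hc1.trans hcz, lt_of_le_of_lt hzZ.1.2 hx₀.2⟩
  -- φ < 0 on (a, z)
  have hφneg : ∀ t ∈ Set.Ioo a z, φ t < 0 := by
    intro t ht
    rcases lt_or_ge t c with h | h
    · exact hδsub ⟨ht.1, h.trans hcδ⟩
    · by_contra hct
      push_neg at hct
      have : (0 : ℝ) ∈ Set.Icc (φ c) (φ t) := ⟨hφc.le, hct⟩
      obtain ⟨w, hw, hw0⟩ := intermediate_value_Icc h
        (hφcont.mono (Set.Icc_subset_Icc hc1.le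
          (((ht.2.le.trans hzZ.1.2).trans hx₀.2.le).trans hx₂b.le))) this
      have hwZ : w ∈ Z := ⟨⟨hw.1, hw.2.trans (ht.2.le.trans hzZ.1.2)⟩, hw0⟩
      have : z ≤ w := csInf_le hZbdd hwZ
      linarith [hw.2, ht.2]
  -- derivative of φ at z is < 0 from Wronskian
  have hzab : z ∈ Set.Icc a b := ⟨hzx₂.1.le, (hzx₂.2.trans hx₂b).le⟩
  have hWz : 0 < W z := hWpos z ⟨hzx₂.1, hzx₂.2.trans hx₂b⟩
  have hψz : ψ z < 0 := hψneg z hzx₂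
  have hWzeq : W z = deriv φ z * ψ z := by rw [hWdef]; simp [hφz]
  have hdφz : deriv φ z < 0 := by
    rw [hWzeq] at hWz
    by_contra h
    push_neg at h
    nlinarith
  -- but derivative at z must be ≥ 0 since φ < 0 to the left
  have hφderivZ : HasDerivAt φ (deriv φ z) z := by
    have h := (key z hzab).1
    rw [h.deriv]; exact h
  have hslopeZ : Tendsto (slope φ z) (nhdsWithin z (Set.Iio z)) (nhds (deriv φ z)) :=
    (hasDerivAt_iff_tendsto_slope.mp hφderivZ).mono_left
      (nhdsWithin_mono _ (fun t ht => ne_of_lt ht))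
  have hge : 0 ≤ deriv φ z := by
    refine ge_of_tendsto hslopeZ ?_
    filter_upwards [Ioo_mem_nhdsLT_of_mem ⟨hzx₂.1, le_rfl⟩] with t ht
    have hφt : φ t < 0 := hφneg t ht
    have htz : t - z < 0 := sub_neg.mpr ht.2
    rw [slope_def_field, hφz]
    have hnum : φ t - 0 < 0 := by linarith
    exact (div_pos_of_neg_of_neg hnum htz).le
  linarith
end

section
/- Let y = φ + iψ solve -y'' + q y = λ r y on [a,b] with y(a) = 0, Im λ > 0, G(x) = ∫_a^x r|y|² dt > 0 on (a,b), ψ'(a) < 0, and let x₂ ∈ (a,b) be the smallest zero of ψ (so ψ < 0 on (a,x₂)). Then φ(x₂) < 0. -/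
open Set Filter Topology

theorem stmt_14 (a b : ℝ) (hab : a < b) (q r : ℝ → ℝ) (lam : ℂ) (hlam : 0 < lam.im)
    (hq : ContinuousOn q (Set.Icc a b)) (hr : ContinuousOn r (Set.Icc a b))
    (y : ℝ → ℂ) (φ ψ : ℝ → ℝ)
    (hφ : ∀ x, φ x = (y x).re) (hψ : ∀ x, ψ x = (y x).im)
    (hsmooth : ∀ x ∈ Set.Icc a b, ContDiffAt ℝ 2 y x)
    (hode : ∀ x ∈ Set.Icc a b,
      -(deriv (deriv y) x) + (q x : ℂ) * y x = lam * (r x : ℂ) * y x)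
    (hya : y a = 0)
    (G : ℝ → ℝ) (hG : ∀ x, G x = ∫ t in a..x, r t * ‖y t‖ ^ 2)
    (hGpos : ∀ x ∈ Set.Ioo a b, 0 < G x)
    (hψ'a : deriv ψ a < 0)
    (x₂ : ℝ) (hx₂ : x₂ ∈ Set.Ioo a b) (hψx₂ : ψ x₂ = 0)
    (hmin : ∀ x ∈ Set.Ioo a x₂, ψ x ≠ 0)
    (hψneg : ∀ x ∈ Set.Ioo a x₂, ψ x < 0) :
    φ x₂ < 0 := by
  obtain ⟨hax₂, hx₂b⟩ := hx₂
  have hφe : φ = fun x => (y x).re := funext hφ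
  have hψe : ψ = fun x => (y x).im := funext hψ
  subst hφe hψe
  -- real and imaginary part derivative helpers
  have hre1 : ∀ t, DifferentiableAt ℝ y t →
      HasDerivAt (fun s => (y s).re) ((deriv y t).re) t := by
    intro t ht
    exact (Complex.reCLM.hasFDerivAt.comp_hasDerivAt t ht.hasDerivAt)
  have him1 : ∀ t, DifferentiableAt ℝ y t →
      HasDerivAt (fun s => (y s).im) ((deriv y t).im) t := by
    intro t ht
    exact (Complex.imCLM.hasFDerivAt.comp_hasDerivAt t ht.hasDerivAt)
  set w : ℝ → ℝ := fun t =>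
    deriv (fun s => (y s).re) t * (y t).im - (y t).re * deriv (fun s => (y s).im) t
    with hw_def
  -- derivative of w at each point of Icc a b
  have key : ∀ x ∈ Set.Icc a b, HasDerivAt w (lam.im * (r x * ‖y x‖ ^ 2)) x := by
    intro x hx
    have h2 := hsmooth x hx
    have hyd : DifferentiableAt ℝ y x := h2.differentiableAt two_ne_zero
    -- deriv y differentiable at x
    obtain ⟨u, hu, hcd⟩ := h2.contDiffOn le_rfl (by simp)
    obtain ⟨t, hts, ht, hxt⟩ := mem_nhds_iff.mp hu
    have hd1 : ContDiffOn ℝ 1 (deriv y) t :=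
      (hcd.mono hts).deriv_of_isOpen ht (by norm_num)
    have hdy2 : HasDerivAt (deriv y) (deriv (deriv y) x) x :=
      ((hd1.differentiableOn one_ne_zero).differentiableAt (ht.mem_nhds hxt)).hasDerivAt
    -- eventual differentiability of y near x
    have hev : ∀ᶠ s in 𝓝 x, DifferentiableAt ℝ y s := by
      filter_upwards [ht.mem_nhds hxt] with s hs
      exact ((hcd.mono hts).contDiffAt (ht.mem_nhds hs)).differentiableAt two_ne_zero
    have hevre : (fun s => deriv (fun u => (y u).re) s) =ᶠ[𝓝 x]
        fun s => (deriv y s).re := by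
      filter_upwards [hev] with s hs using (hre1 s hs).deriv
    have hevim : (fun s => deriv (fun u => (y u).im) s) =ᶠ[𝓝 x]
        fun s => (deriv y s).im := by
      filter_upwards [hev] with s hs using (him1 s hs).deriv
    have hφ'' : HasDerivAt (fun s => deriv (fun u => (y u).re) s)
        ((deriv (deriv y) x).re) x :=
      (Complex.reCLM.hasFDerivAt.comp_hasDerivAt x hdy2).congr_of_eventuallyEq hevre
    have hψ'' : HasDerivAt (fun s => deriv (fun u => (y u).im) s)
        ((deriv (deriv y) x).im) x :=
      (Complex.imCLM.hasFDerivAt.comp_hasDerivAt x hdy2).congr_of_eventuallyEq hevim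
    have hφ1 := hre1 x hyd
    have hψ1 := him1 x hyd
    have hw1 : HasDerivAt w
        ((deriv (deriv y) x).re * (y x).im + deriv (fun u => (y u).re) x * (deriv y x).im
          - ((deriv y x).re * deriv (fun u => (y u).im) x
            + (y x).re * (deriv (deriv y) x).im)) x :=
      (hφ''.mul hψ1).sub (hφ1.mul hψ'')
    convert hw1 using 1
    have e1 : deriv (fun u => (y u).re) x = (deriv y x).re := hφ1.deriv
    have e2 : deriv (fun u => (y u).im) x = (deriv y x).im := hψ1.deriv
    have hy2 : deriv (deriv y) x = (q x : ℂ) * y x - lam * (r x : ℂ) * y x := by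
      linear_combination -hode x hx
    have hre2 : (deriv (deriv y) x).re
        = q x * (y x).re - (lam.re * (r x * (y x).re) - lam.im * (r x * (y x).im)) := by
      rw [hy2]
      simp [Complex.mul_re, Complex.mul_im]
      ring
    have him2 : (deriv (deriv y) x).im
        = q x * (y x).im - (lam.re * (r x * (y x).im) + lam.im * (r x * (y x).re)) := by
      rw [hy2]
      simp [Complex.mul_re, Complex.mul_im]
      ring
    have hnorm : ‖y x‖ ^ 2 = (y x).re ^ 2 + (y x).im ^ 2 := by
      rw [Complex.sq_norm, Complex.normSq_apply]; ring
    rw [e1, e2, hre2, him2, hnorm]; ring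
  -- FTC from a to x₂
  have hax₂le : a ≤ x₂ := hax₂.le
  have hsub : Set.Icc a x₂ ⊆ Set.Icc a b := Set.Icc_subset_Icc le_rfl hx₂b.le
  have hycont : ContinuousOn y (Set.Icc a b) := fun s hs =>
    ((hsmooth s hs).continuousAt).continuousWithinAt
  have hgcont : ContinuousOn (fun s => lam.im * (r s * ‖y s‖ ^ 2)) (Set.Icc a x₂) :=
    continuousOn_const.mul ((hr.mono hsub).mul (((hycont.mono hsub).norm).pow 2))
  have hint : IntervalIntegrable (fun s => lam.im * (r s * ‖y s‖ ^ 2))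
      MeasureTheory.volume a x₂ := by
    apply hgcont.intervalIntegrable_of_Icc hax₂le
  have hFTC : ∫ s in a..x₂, lam.im * (r s * ‖y s‖ ^ 2) = w x₂ - w a := by
    apply intervalIntegral.integral_eq_sub_of_hasDerivAt
    · intro s hs
      rw [Set.uIcc_of_le hax₂le] at hs
      exact key s (hsub hs)
    · exact hint
  have hval : ∫ s in a..x₂, lam.im * (r s * ‖y s‖ ^ 2) = lam.im * G x₂ := by
    rw [intervalIntegral.integral_const_mul, hG x₂]
  have hwa : w a = 0 := by simp [hw_def, hya]
  have hwx₂ : w x₂ = lam.im * G x₂ := by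
    have := hFTC.symm.trans hval
    linarith
  have hGx₂ : 0 < G x₂ := hGpos x₂ ⟨hax₂, hx₂b⟩
  have hwpos : 0 < w x₂ := by
    rw [hwx₂]; exact mul_pos hlam hGx₂
  -- ψ x₂ = 0
  have hψx₂' : (y x₂).im = 0 := hψx₂
  -- derivative of ψ at x₂ is nonnegative
  have hx₂Icc : x₂ ∈ Set.Icc a b := ⟨hax₂le, hx₂b.le⟩
  have hydx₂ : DifferentiableAt ℝ y x₂ :=
    (hsmooth x₂ hx₂Icc).differentiableAt two_ne_zero
  have hψhas : HasDerivAt (fun s => (y s).im) ((deriv y x₂).im) x₂ := him1 x₂ hydx₂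
  have hdge : 0 ≤ (deriv y x₂).im := by
    have hslope := hasDerivAt_iff_tendsto_slope.mp hψhas
    have h2 : Filter.Tendsto (slope (fun s => (y s).im) x₂) (𝓝[<] x₂)
        (𝓝 ((deriv y x₂).im)) :=
      hslope.mono_left (nhdsWithin_mono _ (fun t ht => ne_of_lt ht))
    refine ge_of_tendsto h2 ?_
    filter_upwards [Ioo_mem_nhdsLT_of_mem ⟨hax₂, le_refl x₂⟩] with t ht
    have h1 : (y t).im < 0 := hψneg t ht
    have h2' : t - x₂ < 0 := sub_neg.mpr ht.2
    rw [slope_def_field]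
    rw [hψx₂']
    exact le_of_lt (div_pos_of_neg_of_neg (by linarith) h2')
  have hd : deriv (fun s => (y s).im) x₂ = (deriv y x₂).im := hψhas.deriv
  have hwx₂' : w x₂ = -(y x₂).re * (deriv y x₂).im := by
    rw [hw_def]; simp only []
    rw [hψx₂', hd]; ring
  show (y x₂).re < 0
  by_contra hcon
  push_neg at hcon
  nlinarith [mul_nonneg hcon hdge]
end

section
/- Suppose r : [a,b] → ℝ satisfies r > 0 on (a,c), r ≡ 0 on [c,d], r < 0 on (d,b) (a < c ≤ d < b), and y is a nontrivial non-real eigenfunction of -y'' + q y = λ r y with y(a) = y(b) = 0 and Im λ ≠ 0. Then G(x) = ∫_a^x r|y|² dt is of one sign on (a,b): G(x) ≠ 0 for all x ∈ (a,b). -/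
open Set Filter

/-- Uniqueness: a second-order linear ODE solution vanishing to first order at a point
of an interval (with continuous coefficient) vanishes on the interval. -/
lemma ode_zero {u v : ℝ} (huv : u ≤ v) {φ : ℝ → ℂ} (hφ : ContinuousOn φ (Set.Icc u v))
    {y : ℝ → ℂ}
    (hy1 : ∀ t ∈ Set.Icc u v, HasDerivAt y (deriv y t) t)
    (hy2 : ∀ t ∈ Set.Icc u v, HasDerivAt (deriv y) (φ t * y t) t)
    {t₀ : ℝ} (ht₀ : t₀ ∈ Set.Icc u v) (h0 : y t₀ = 0) (h0' : deriv y t₀ = 0) :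
    ∀ t ∈ Set.Icc u v, y t = 0 := by
  -- bound on φ
  obtain ⟨M, hM⟩ : ∃ M, ∀ s ∈ Set.Icc u v, ‖φ s‖ ≤ M :=
    (isCompact_Icc.exists_bound_of_continuousOn hφ)
  set φc : ℝ → ℂ := fun t => φ (max u (min t v)) with hφc
  have hclamp : ∀ t, max u (min t v) ∈ Set.Icc u v := fun t =>
    ⟨le_max_left _ _, max_le huv (min_le_right _ _)⟩
  have hφceq : ∀ t ∈ Set.Icc u v, φc t = φ t := by
    intro t ht
    simp only [hφc]
    rw [min_eq_left ht.2, max_eq_right ht.1]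
  set K : NNReal := ⟨max 1 M, le_trans zero_le_one (le_max_left _ _)⟩ with hK
  set V : ℝ → ℂ × ℂ → ℂ × ℂ := fun t p => (p.2, φc t * p.1) with hV
  have hVlip : ∀ t, LipschitzWith K (V t) := by
    intro t
    have h1 : LipschitzWith 1 (fun p : ℂ × ℂ => p.2) := LipschitzWith.prod_snd
    have h2 : LipschitzWith ‖φc t‖₊ (fun z : ℂ => φc t * z) :=
      LipschitzWith.of_dist_le_mul fun x y => by
        rw [dist_eq_norm, dist_eq_norm, ← mul_sub, norm_mul]
        simp
    have h3 : LipschitzWith (‖φc t‖₊ * 1) (fun p : ℂ × ℂ => φc t * p.1) :=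
      h2.comp LipschitzWith.prod_fst
    have h4 := h1.prodMk h3
    apply h4.weaken
    have hb : ‖φc t‖ ≤ M := hM _ (hclamp t)
    rw [mul_one]
    refine max_le ?_ ?_ <;> rw [← NNReal.coe_le_coe]
    · exact le_max_left 1 M
    · exact le_trans hb (le_max_right 1 M)
  set f : ℝ → ℂ × ℂ := fun t => (y t, deriv y t) with hf
  have hfc : ContinuousOn f (Set.Icc u v) := by
    apply continuousOn_of_forall_continuousAt
    intro t ht
    exact ((hy1 t ht).continuousAt.prodMk (hy2 t ht).continuousAt)
  have hfd : ∀ t ∈ Set.Icc u v, HasDerivAt f (V t (f t)) t := by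
    intro t ht
    have h := (hy1 t ht).prodMk (hy2 t ht)
    have he : V t (f t) = (deriv y t, φ t * y t) := by
      simp only [hV, hf, hφceq t ht]
    rw [he]
    exact h
  have hgd : ∀ (t : ℝ), HasDerivAt (fun _ : ℝ => ((0 : ℂ), (0 : ℂ))) (V t ((0 : ℂ), (0 : ℂ))) t := by
    intro t
    have : V t ((0 : ℂ), (0 : ℂ)) = ((0 : ℂ), (0 : ℂ)) := by simp [hV]
    rw [this]
    exact hasDerivAt_const t _
  have hf0 : f t₀ = ((0 : ℂ), (0 : ℂ)) := by simp [hf, h0, h0']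
  have key : Set.EqOn f (fun _ => ((0 : ℂ), (0 : ℂ))) (Set.Icc u v) := by
    have hsplit : Set.Icc u v = Set.Icc u t₀ ∪ Set.Icc t₀ v := (Set.Icc_union_Icc_eq_Icc ht₀.1 ht₀.2).symm
    rw [hsplit]
    apply Set.EqOn.union
    · exact ODE_solution_unique_of_mem_Icc_left
        (fun t _ => ((hVlip t).lipschitzOnWith (s := Set.univ)))
        (hfc.mono (Set.Icc_subset_Icc le_rfl ht₀.2))
        (fun t ht => ((hfd t ⟨le_of_lt ht.1, le_trans ht.2 ht₀.2⟩).hasDerivWithinAt))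
        (fun _ _ => trivial)
        (continuousOn_const)
        (fun t _ => (hgd t).hasDerivWithinAt)
        (fun _ _ => trivial) hf0
    · exact ODE_solution_unique_of_mem_Icc_right
        (fun t _ => ((hVlip t).lipschitzOnWith (s := Set.univ)))
        (hfc.mono (Set.Icc_subset_Icc ht₀.1 le_rfl))
        (fun t ht => ((hfd t ⟨le_trans ht₀.1 ht.1, le_of_lt ht.2⟩).hasDerivWithinAt))
        (fun _ _ => trivial)
        (continuousOn_const)
        (fun t _ => (hgd t).hasDerivWithinAt)
        (fun _ _ => trivial) hf0
  intro t ht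
  have h2 := key ht
  have : (y t, deriv y t) = ((0:ℂ),(0:ℂ)) := h2
  exact (Prod.ext_iff.mp this).1
open Set Filter Topology

/-- A continuous function, nonnegative on an open interval, with zero integral, vanishes. -/
lemma zero_of_integral_zero {u v : ℝ} (huv : u < v) {h : ℝ → ℝ}
    (hc : ContinuousOn h (Set.Icc u v)) (hnn : ∀ t ∈ Set.Ioo u v, 0 ≤ h t)
    (hzero : (∫ t in u..v, h t) = 0) : ∀ t ∈ Set.Ioo u v, h t = 0 := by
  -- extend nonnegativity to the closed interval
  have hnn' : ∀ t ∈ Set.Icc u v, 0 ≤ h t := by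
    have hu0 : 0 ≤ h u := by
      have hne : (𝓝[Set.Ioo u v] u).NeBot := by
        apply mem_closure_iff_nhdsWithin_neBot.mp
        rw [closure_Ioo (ne_of_lt huv)]
        exact ⟨le_rfl, le_of_lt huv⟩
      have htd : Tendsto h (𝓝[Set.Ioo u v] u) (𝓝 (h u)) :=
        (hc u ⟨le_rfl, le_of_lt huv⟩).mono_left (nhdsWithin_mono _ Set.Ioo_subset_Icc_self)
      exact ge_of_tendsto htd (eventually_mem_nhdsWithin.mono fun s hs => hnn s hs)
    have hv0 : 0 ≤ h v := by
      have hne : (𝓝[Set.Ioo u v] v).NeBot := by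
        apply mem_closure_iff_nhdsWithin_neBot.mp
        rw [closure_Ioo (ne_of_lt huv)]
        exact ⟨le_of_lt huv, le_rfl⟩
      have htd : Tendsto h (𝓝[Set.Ioo u v] v) (𝓝 (h v)) :=
        (hc v ⟨le_of_lt huv, le_rfl⟩).mono_left (nhdsWithin_mono _ Set.Ioo_subset_Icc_self)
      exact ge_of_tendsto htd (eventually_mem_nhdsWithin.mono fun s hs => hnn s hs)
    intro t ht
    rcases eq_or_lt_of_le ht.1 with h1 | h1
    · rw [← h1]; exact hu0
    rcases eq_or_lt_of_le ht.2 with h2 | h2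
    · rw [h2]; exact hv0
    · exact hnn t ⟨h1, h2⟩
  by_contra hcon
  push_neg at hcon
  obtain ⟨t₁, ht₁, hne⟩ := hcon
  have ht₁pos : 0 < h t₁ := lt_of_le_of_ne (hnn t₁ ht₁) (Ne.symm hne)
  have hct : ContinuousAt h t₁ := hc.continuousAt (Icc_mem_nhds ht₁.1 ht₁.2)
  have hev : ∀ᶠ s in 𝓝 t₁, 0 < h s := hct.eventually (eventually_gt_nhds ht₁pos) -- maybe wrong
  obtain ⟨p', q', hmem, hsub⟩ := mem_nhds_iff_exists_Ioo_subset.mp hev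
  set p := max p' u with hp
  set q := min q' v with hq
  have hpt : p < t₁ := max_lt hmem.1 ht₁.1
  have htq : t₁ < q := lt_min hmem.2 ht₁.2
  have hup : u ≤ p := le_max_right _ _
  have hqv : q ≤ v := min_le_right _ _
  have hIpq : Set.Icc p q ⊆ Set.Icc u v := Set.Icc_subset_Icc hup hqv
  have hi1 : IntervalIntegrable h MeasureTheory.volume u p :=
    (hc.mono (Set.Icc_subset_Icc le_rfl (le_trans (le_of_lt hpt) (le_of_lt ht₁.2)))).intervalIntegrable_of_Icc hup
  have hi2 : IntervalIntegrable h MeasureTheory.volume p q :=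
    (hc.mono hIpq).intervalIntegrable_of_Icc (le_of_lt (lt_trans hpt htq))
  have hi3 : IntervalIntegrable h MeasureTheory.volume q v :=
    (hc.mono (Set.Icc_subset_Icc (le_trans hup (le_of_lt (lt_trans hpt htq))) le_rfl)).intervalIntegrable_of_Icc hqv
  have h2pos : 0 < ∫ t in p..q, h t := by
    apply intervalIntegral.intervalIntegral_pos_of_pos_on hi2 _ (lt_trans hpt htq)
    intro s hs
    exact hsub ⟨lt_of_le_of_lt (le_max_left p' u) hs.1, lt_of_lt_of_le hs.2 (min_le_left q' v)⟩
  have h1nn : 0 ≤ ∫ t in u..p, h t := by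
    apply intervalIntegral.integral_nonneg hup
    intro s hs
    exact hnn' s ⟨hs.1, le_trans hs.2 (le_trans (le_of_lt hpt) (le_of_lt ht₁.2))⟩
  have h3nn : 0 ≤ ∫ t in q..v, h t := by
    apply intervalIntegral.integral_nonneg hqv
    intro s hs
    exact hnn' s ⟨le_trans (le_trans hup (le_of_lt (lt_trans hpt htq))) hs.1, hs.2⟩
  have hsum : (∫ t in u..p, h t) + (∫ t in p..q, h t) + (∫ t in q..v, h t) = ∫ t in u..v, h t := by
    rw [intervalIntegral.integral_add_adjacent_intervals hi1 hi2]
    exact intervalIntegral.integral_add_adjacent_intervals (hi1.trans hi2) hi3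
  rw [hzero] at hsum
  linarith

/-- Limit lemma: a function continuous at a boundary point of a set on which it vanishes
(with the point in the closure) is zero there. -/
lemma lim_zero {g : ℝ → ℂ} {s : Set ℝ} {t₀ : ℝ} (hg : ContinuousAt g t₀)
    (hcl : t₀ ∈ closure s) (h0 : ∀ t ∈ s, g t = 0) : g t₀ = 0 := by
  have hne : (𝓝[s] t₀).NeBot := mem_closure_iff_nhdsWithin_neBot.mp hcl
  have h1 : Tendsto g (𝓝[s] t₀) (𝓝 (g t₀)) := hg.tendsto.mono_left nhdsWithin_le_nhds
  have h2 : Tendsto g (𝓝[s] t₀) (𝓝 0) := by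
    apply Tendsto.congr' _ tendsto_const_nhds
    exact (eventually_mem_nhdsWithin.mono fun t ht => (h0 t ht).symm)
  exact tendsto_nhds_unique h1 h2

set_option maxRecDepth 8000 in
theorem stmt_16 (a b c d : ℝ) (hac : a < c) (hcd : c ≤ d) (hdb : d < b)
    (q r : ℝ → ℝ) (lam : ℂ) (hlam : lam.im ≠ 0)
    (hq : ContinuousOn q (Set.Icc a b))
    (hrpos : ∀ x ∈ Set.Ioo a c, 0 < r x)
    (hrzero : ∀ x ∈ Set.Icc c d, r x = 0)
    (hrneg : ∀ x ∈ Set.Ioo d b, r x < 0)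
    (hrcont1 : ContinuousOn r (Set.Ioo a c)) (hrcont2 : ContinuousOn r (Set.Ioo d b))
    (y : ℝ → ℂ)
    (hsmooth : ∀ x ∈ Set.Icc a b, ContDiffAt ℝ 2 y x)
    (hode : ∀ x ∈ Set.Icc a b,
      -(deriv (deriv y) x) + (q x : ℂ) * y x = lam * (r x : ℂ) * y x)
    (hya : y a = 0) (hyb : y b = 0)
    (hnontriv : ∃ x ∈ Set.Icc a b, y x ≠ 0)
    (G : ℝ → ℝ) (hG : ∀ x, G x = ∫ t in a..x, r t * ‖y t‖ ^ 2) :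
    ∀ x ∈ Set.Ioo a b, G x ≠ 0 := by
  have hab : a < b := lt_trans (lt_of_lt_of_le hac hcd) hdb
  have had : a < d := lt_of_lt_of_le hac hcd
  have hcb : c < b := lt_of_le_of_lt hcd hdb
  have haIcc : a ∈ Set.Icc a b := ⟨le_rfl, le_of_lt hab⟩
  have hbIcc : b ∈ Set.Icc a b := ⟨le_of_lt hab, le_rfl⟩
  have hcIcc : c ∈ Set.Icc a b := ⟨le_of_lt hac, le_of_lt hcb⟩
  have hdIcc : d ∈ Set.Icc a b := ⟨le_of_lt had, le_of_lt hdb⟩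
  have hlam0 : lam ≠ 0 := fun h => hlam (by rw [h]; rfl)
  -- basic regularity facts from C²
  have hC2 : ∀ x ∈ Set.Icc a b, HasDerivAt y (deriv y x) x ∧
      HasDerivAt (deriv y) (deriv (deriv y) x) x ∧ ContinuousAt (deriv (deriv y)) x := by
    intro x hx
    obtain ⟨u, hu, hcd2⟩ := (hsmooth x hx).contDiffOn (le_refl 2) (by simp)
    obtain ⟨t, hts, hto, hxt⟩ := mem_nhds_iff.mp hu
    have hct : ContDiffOn ℝ 2 y t := hcd2.mono hts
    have hd1 : ContDiffOn ℝ 1 (deriv y) t := hct.deriv_of_isOpen hto (by norm_num)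
    refine ⟨?_, ?_, ?_⟩
    · exact ((hct.differentiableOn (by norm_num)).differentiableAt (hto.mem_nhds hxt)).hasDerivAt
    · exact ((hd1.differentiableOn (by norm_num)).differentiableAt (hto.mem_nhds hxt)).hasDerivAt
    · have hd0 : ContDiffOn ℝ 0 (deriv (deriv y)) t :=
        hd1.deriv_of_isOpen hto (by norm_num)
      exact (hd0.continuousOn.continuousAt (hto.mem_nhds hxt))
  have hode' : ∀ x ∈ Set.Icc a b,
      deriv (deriv y) x = ((q x : ℂ) - lam * (r x : ℂ)) * y x := by
    intro x hx
    have h := hode x hx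
    ring_nf
    ring_nf at h
    linear_combination -h
  set f : ℝ → ℝ := fun t => (((q t : ℂ) * y t - deriv (deriv y) t) / lam * (starRingEnd ℂ) (y t)).re with hfdef
  have hf_eq : ∀ t ∈ Set.Icc a b, f t = r t * ‖y t‖ ^ 2 := by
    intro t ht
    have h := hode t ht
    have h1 : ((q t : ℂ) * y t - deriv (deriv y) t) / lam = (r t : ℂ) * y t := by
      field_simp
      linear_combination h
    simp only [hfdef, h1, mul_assoc, Complex.mul_conj]
    rw [← Complex.ofReal_mul, Complex.ofReal_re, Complex.normSq_eq_norm_sq]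
  have hy_c : ContinuousOn y (Set.Icc a b) :=
    fun x hx => ((hC2 x hx).1.continuousAt).continuousWithinAt
  have hdd_c : ContinuousOn (deriv (deriv y)) (Set.Icc a b) :=
    fun x hx => ((hC2 x hx).2.2).continuousWithinAt
  have hf_cont : ContinuousOn f (Set.Icc a b) := by
    apply Complex.continuous_re.comp_continuousOn
    exact ((((Complex.continuous_ofReal.comp_continuousOn hq).mul hy_c).sub hdd_c).div_const
      lam).mul (Complex.continuous_conj.comp_continuousOn hy_c)
  set W : ℝ → ℝ := fun t => (deriv y t * (starRingEnd ℂ) (y t)).im with hWdef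
  have hW : ∀ t ∈ Set.Icc a b, HasDerivAt W (-lam.im * f t) t := by
    intro t ht
    obtain ⟨h1, h2, -⟩ := hC2 t ht
    have h3 : HasDerivAt (fun s => (starRingEnd ℂ) (y s)) ((starRingEnd ℂ) (deriv y t)) t := by
      simpa [Complex.star_def] using h1.star
    have h4 := h2.mul h3
    have h5 := Complex.imCLM.hasFDerivAt.comp_hasDerivAt t h4
    have h6 : (deriv (deriv y) t * (starRingEnd ℂ) (y t)
        + deriv y t * (starRingEnd ℂ) (deriv y t)).im = -lam.im * f t := by
      rw [hode' t ht, hf_eq t ht, Complex.mul_conj]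
      simp only [Complex.add_im, Complex.mul_im, Complex.mul_re, Complex.sub_re,
        Complex.sub_im, Complex.ofReal_re, Complex.ofReal_im, Complex.conj_re,
        Complex.conj_im, Complex.sq_norm, Complex.normSq_apply]
      ring
    rw [← h6]
    exact h5
  have hWa : W a = 0 := by simp [hWdef, hya]
  have hWb : W b = 0 := by simp [hWdef, hyb]
  have hfint : ∀ u v : ℝ, u ∈ Set.Icc a b → v ∈ Set.Icc a b →
      IntervalIntegrable f MeasureTheory.volume u v := fun u v hu hv =>
    (hf_cont.mono (Set.uIcc_subset_Icc hu hv)).intervalIntegrable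
  have hGf : ∀ x ∈ Set.Icc a b, G x = ∫ t in a..x, f t := by
    intro x hx
    rw [hG x]
    apply intervalIntegral.integral_congr
    intro t ht
    exact (hf_eq t (Set.uIcc_subset_Icc haIcc hx ht)).symm
  have keyG : ∀ x ∈ Set.Icc a b, lam.im * G x = -W x := by
    intro x hx
    have hsub := Set.uIcc_subset_Icc haIcc hx
    have hftc := intervalIntegral.integral_eq_sub_of_hasDerivAt
      (f := W) (f' := fun t => -lam.im * f t)
      (fun t ht => hW t (hsub ht))
      ((continuousOn_const.mul (hf_cont.mono hsub)).intervalIntegrable)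
    rw [intervalIntegral.integral_const_mul, hWa, sub_zero] at hftc
    rw [hGf x hx]
    linarith [hftc]
  have hGb : G b = 0 := by
    have h := keyG b hbIcc
    rw [hWb, neg_zero] at h
    exact (mul_eq_zero.mp h).resolve_left hlam
  -- more helpers
  have hclos : ∀ u v : ℝ, u < v → u ∈ closure (Set.Ioo u v) ∧ v ∈ closure (Set.Ioo u v) := by
    intro u v h
    rw [closure_Ioo (ne_of_lt h)]
    exact ⟨⟨le_rfl, le_of_lt h⟩, ⟨le_of_lt h, le_rfl⟩⟩
  have hy2' : ∀ t ∈ Set.Icc a b,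
      HasDerivAt (deriv y) (((q t : ℂ) - lam * (r t : ℂ)) * y t) t := by
    intro t ht
    have h := (hC2 t ht).2.1
    rwa [hode' t ht] at h
  have hφc1 : ∀ s : Set ℝ, s ⊆ Set.Ioo a c → s ⊆ Set.Icc a b →
      ContinuousOn (fun t => (q t : ℂ) - lam * (r t : ℂ)) s := fun s h1 h2 =>
    (Complex.continuous_ofReal.comp_continuousOn (hq.mono h2)).sub
      (continuousOn_const.mul (Complex.continuous_ofReal.comp_continuousOn (hrcont1.mono h1)))
  have hφc2 : ∀ s : Set ℝ, s ⊆ Set.Ioo d b → s ⊆ Set.Icc a b →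
      ContinuousOn (fun t => (q t : ℂ) - lam * (r t : ℂ)) s := fun s h1 h2 =>
    (Complex.continuous_ofReal.comp_continuousOn (hq.mono h2)).sub
      (continuousOn_const.mul (Complex.continuous_ofReal.comp_continuousOn (hrcont2.mono h1)))
  have hnorm0 : ∀ t : ℝ, r t ≠ 0 → r t * ‖y t‖ ^ 2 = 0 → y t = 0 := by
    intro t hr h
    have h2 : ‖y t‖ ^ 2 = 0 := (mul_eq_zero.mp h).resolve_left hr
    exact norm_eq_zero.mp ((pow_eq_zero_iff two_ne_zero).mp h2)
  -- the contradiction engine: if y vanishes on (a,c), contradiction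
  have henginel : (∀ t ∈ Set.Ioo a c, y t = 0) → False := by
    intro hyz
    have hyc : y c = 0 :=
      lim_zero ((hC2 c hcIcc).1.continuousAt) (hclos a c hac).2 hyz
    have hyd0 : ∀ t ∈ Set.Ioo a c, deriv y t = 0 := by
      intro t ht
      have hev : y =ᶠ[nhds t] fun _ => (0 : ℂ) :=
        Filter.eventually_of_mem (Ioo_mem_nhds ht.1 ht.2) hyz
      rw [hev.deriv_eq]
      exact deriv_const _ _
    have hdc : deriv y c = 0 :=
      lim_zero ((hC2 c hcIcc).2.1.continuousAt) (hclos a c hac).2 hyd0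
    have hIcd : Set.Icc c d ⊆ Set.Icc a b := Set.Icc_subset_Icc (le_of_lt hac) (le_of_lt hdb)
    have hycd : ∀ t ∈ Set.Icc c d, y t = 0 := by
      refine ode_zero hcd ?_ (fun t ht => (hC2 t (hIcd ht)).1)
        (fun t ht => hy2' t (hIcd ht)) (t₀ := c) ⟨le_rfl, hcd⟩ hyc hdc
      exact (Complex.continuous_ofReal.comp_continuousOn (hq.mono hIcd)).congr
        (fun t ht => by simp [hrzero t ht])
    have hyad : ∀ t ∈ Set.Icc a d, y t = 0 := by
      intro t ht
      rcases lt_or_ge t c with h | h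
      · rcases eq_or_lt_of_le ht.1 with h2 | h2
        · rw [← h2]; exact hya
        · exact hyz t ⟨h2, h⟩
      · exact hycd t ⟨h, ht.2⟩
    have hGd : G d = 0 := by
      rw [hG d, intervalIntegral.integral_congr (g := fun _ => (0 : ℝ))
        (fun t ht => by
          rw [Set.uIcc_of_le (le_of_lt had)] at ht
          simp [hyad t ht]), intervalIntegral.integral_zero]
    have hsplit1 := intervalIntegral.integral_add_adjacent_intervals
      (hfint a d haIcc hdIcc) (hfint d b hdIcc hbIcc)
    have hint_db : (∫ t in d..b, f t) = 0 := by
      linarith [hGf d hdIcc, hGf b hbIcc, hsplit1]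
    have hIdb : Set.Icc d b ⊆ Set.Icc a b := Set.Icc_subset_Icc (le_of_lt had) le_rfl
    have h0 := zero_of_integral_zero hdb (h := fun t => -f t) ((hf_cont.mono hIdb).neg)
      (fun t ht => by
        have he := hf_eq t (hIdb (Set.Ioo_subset_Icc_self ht))
        have hr := hrneg t ht
        show (0:ℝ) ≤ -f t
        nlinarith [sq_nonneg ‖y t‖])
      (by rw [intervalIntegral.integral_neg, hint_db, neg_zero])
    have hyz_db : ∀ t ∈ Set.Ioo d b, y t = 0 := by
      intro t ht
      have hf0 : -f t = 0 := h0 t ht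
      have he := hf_eq t (hIdb (Set.Ioo_subset_Icc_self ht))
      exact hnorm0 t (ne_of_lt (hrneg t ht)) (by linarith)
    obtain ⟨x, hx, hxne⟩ := hnontriv
    apply hxne
    rcases le_or_gt x d with h | h
    · exact hyad x ⟨hx.1, h⟩
    · rcases eq_or_lt_of_le hx.2 with h4 | h4
      · rw [h4]; exact hyb
      · exact hyz_db x ⟨h, h4⟩
  -- if G c = 0 then contradiction
  have hcaseleft : G c = 0 → False := by
    intro hGc
    have hintac : (∫ t in a..c, f t) = 0 := by rw [← hGf c hcIcc]; exact hGc
    have hIac : Set.Icc a c ⊆ Set.Icc a b := Set.Icc_subset_Icc le_rfl (le_of_lt hcb)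
    have h0 := zero_of_integral_zero hac (hf_cont.mono hIac)
      (fun t ht => by
        have he := hf_eq t (hIac (Set.Ioo_subset_Icc_self ht))
        have hr := hrpos t ht
        show (0:ℝ) ≤ f t
        nlinarith [sq_nonneg ‖y t‖]) hintac
    apply henginel
    intro t ht
    have he := hf_eq t (hIac (Set.Ioo_subset_Icc_self ht))
    have hf0 : f t = 0 := h0 t ht
    exact hnorm0 t (ne_of_gt (hrpos t ht)) (by linarith)
  -- main case analysis
  intro x₀ hx₀ hGx₀
  have hx₀I : x₀ ∈ Set.Icc a b := Set.Ioo_subset_Icc_self hx₀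
  have hIooac : Set.Ioo a c ⊆ Set.Icc a b :=
    fun s hs => ⟨le_of_lt hs.1, le_of_lt (lt_trans hs.2 hcb)⟩
  rcases le_or_gt x₀ c with hxc | hxc
  · -- 1st region
    have hint0 : (∫ t in a..x₀, f t) = 0 := by rw [← hGf x₀ hx₀I]; exact hGx₀
    have hsubx : Set.Icc a x₀ ⊆ Set.Icc a b := Set.Icc_subset_Icc le_rfl hx₀I.2
    have h0 := zero_of_integral_zero hx₀.1 (hf_cont.mono hsubx)
      (fun t ht => by
        have he := hf_eq t (hsubx (Set.Ioo_subset_Icc_self ht))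
        have hr := hrpos t ⟨ht.1, lt_of_lt_of_le ht.2 hxc⟩
        show (0:ℝ) ≤ f t
        nlinarith [sq_nonneg ‖y t‖]) hint0
    have hyz0 : ∀ t ∈ Set.Ioo a x₀, y t = 0 := by
      intro t ht
      have he := hf_eq t (hsubx (Set.Ioo_subset_Icc_self ht))
      have hf0 : f t = 0 := h0 t ht
      exact hnorm0 t (ne_of_gt (hrpos t ⟨ht.1, lt_of_lt_of_le ht.2 hxc⟩)) (by linarith)
    apply henginel
    intro t ht
    rcases lt_or_ge t x₀ with h | h
    · exact hyz0 t ⟨ht.1, h⟩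
    · have hx₁ : (a + x₀) / 2 ∈ Set.Ioo a x₀ := ⟨by linarith [hx₀.1], by linarith [hx₀.1]⟩
      have hx₁t : (a + x₀) / 2 ≤ t := le_trans (le_of_lt hx₁.2) h
      have hsub2 : Set.Icc ((a + x₀) / 2) t ⊆ Set.Ioo a c :=
        fun s hs => ⟨lt_of_lt_of_le hx₁.1 hs.1, lt_of_le_of_lt hs.2 ht.2⟩
      have hsub3 : Set.Icc ((a + x₀) / 2) t ⊆ Set.Icc a b := subset_trans hsub2 hIooac
      have hd0 : deriv y ((a + x₀) / 2) = 0 := by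
        have hev : y =ᶠ[nhds ((a + x₀) / 2)] fun _ => (0 : ℂ) :=
          Filter.eventually_of_mem (Ioo_mem_nhds hx₁.1 hx₁.2) hyz0
        rw [hev.deriv_eq]
        exact deriv_const _ _
      exact ode_zero hx₁t (hφc1 _ hsub2 hsub3) (fun s hs => (hC2 s (hsub3 hs)).1)
        (fun s hs => hy2' s (hsub3 hs)) ⟨le_rfl, hx₁t⟩ (hyz0 _ hx₁) hd0 t ⟨hx₁t, le_rfl⟩
  · rcases le_or_gt x₀ d with hxd | hxd
    · -- 2nd region
      have hintcx : (∫ t in c..x₀, f t) = 0 := by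
        rw [intervalIntegral.integral_congr (g := fun _ => (0 : ℝ))
          (fun t ht => by
            rw [Set.uIcc_of_le (le_of_lt hxc)] at ht
            have := hf_eq t ⟨le_trans (le_of_lt hac) ht.1, le_trans ht.2 hx₀I.2⟩
            rw [hrzero t ⟨ht.1, le_trans ht.2 hxd⟩] at this
            simpa using this), intervalIntegral.integral_zero]
      have hadd := intervalIntegral.integral_add_adjacent_intervals
        (hfint a c haIcc hcIcc) (hfint c x₀ hcIcc hx₀I)
      exact hcaseleft (by linarith [hGf c hcIcc, hGf x₀ hx₀I, hadd, hintcx])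
    · -- 3rd region
      have hsplit2 := intervalIntegral.integral_add_adjacent_intervals
        (hfint a x₀ haIcc hx₀I) (hfint x₀ b hx₀I hbIcc)
      have hint_xb : (∫ t in x₀..b, f t) = 0 := by
        linarith [hGf x₀ hx₀I, hGf b hbIcc, hsplit2, hGb]
      have hsubxb : Set.Icc x₀ b ⊆ Set.Icc a b := Set.Icc_subset_Icc hx₀I.1 le_rfl
      have h0 := zero_of_integral_zero hx₀.2 (h := fun t => -f t) ((hf_cont.mono hsubxb).neg)
        (fun t ht => by
          have he := hf_eq t (hsubxb (Set.Ioo_subset_Icc_self ht))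
          have hr := hrneg t ⟨lt_trans hxd ht.1, ht.2⟩
          show (0:ℝ) ≤ -f t
          nlinarith [sq_nonneg ‖y t‖])
        (by rw [intervalIntegral.integral_neg, hint_xb, neg_zero])
      have hyzxb : ∀ t ∈ Set.Ioo x₀ b, y t = 0 := by
        intro t ht
        have he := hf_eq t (hsubxb (Set.Ioo_subset_Icc_self ht))
        have hf0 : -f t = 0 := h0 t ht
        exact hnorm0 t (ne_of_lt (hrneg t ⟨lt_trans hxd ht.1, ht.2⟩)) (by linarith)
      have hx₁ : (x₀ + b) / 2 ∈ Set.Ioo x₀ b := ⟨by linarith [hx₀.2], by linarith [hx₀.2]⟩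
      have hdx₁ : d < (x₀ + b) / 2 := lt_trans hxd hx₁.1
      have hd0 : deriv y ((x₀ + b) / 2) = 0 := by
        have hev : y =ᶠ[nhds ((x₀ + b) / 2)] fun _ => (0 : ℂ) :=
          Filter.eventually_of_mem (Ioo_mem_nhds hx₁.1 hx₁.2) hyzxb
        rw [hev.deriv_eq]
        exact deriv_const _ _
      have hyzdx : ∀ t ∈ Set.Ioo d ((x₀ + b) / 2), y t = 0 := by
        intro t ht
        rcases lt_or_ge x₀ t with h | h
        · exact hyzxb t ⟨h, lt_trans ht.2 hx₁.2⟩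
        · have htx₁ : t ≤ (x₀ + b) / 2 := le_of_lt ht.2
          have hsub2 : Set.Icc t ((x₀ + b) / 2) ⊆ Set.Ioo d b :=
            fun s hs => ⟨lt_of_lt_of_le ht.1 hs.1, lt_of_le_of_lt hs.2 hx₁.2⟩
          have hsub3 : Set.Icc t ((x₀ + b) / 2) ⊆ Set.Icc a b :=
            fun s hs => ⟨le_of_lt (lt_trans had (hsub2 hs).1), le_of_lt (hsub2 hs).2⟩
          exact ode_zero htx₁ (hφc2 _ hsub2 hsub3) (fun s hs => (hC2 s (hsub3 hs)).1)
            (fun s hs => hy2' s (hsub3 hs)) (t₀ := (x₀ + b) / 2) ⟨htx₁, le_rfl⟩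
            (hyzxb _ hx₁) hd0 t ⟨le_rfl, htx₁⟩
      have hyd : y d = 0 :=
        lim_zero ((hC2 d hdIcc).1.continuousAt) (hclos d _ hdx₁).1 hyzdx
      have hWd : W d = 0 := by simp [hWdef, hyd]
      have hGd : G d = 0 := by
        have h := keyG d hdIcc
        rw [hWd, neg_zero] at h
        exact (mul_eq_zero.mp h).resolve_left hlam
      have hintcd : (∫ t in c..d, f t) = 0 := by
        rw [intervalIntegral.integral_congr (g := fun _ => (0 : ℝ))
          (fun t ht => by
            rw [Set.uIcc_of_le hcd] at ht
            have := hf_eq t ⟨le_trans (le_of_lt hac) ht.1, le_trans ht.2 (le_of_lt hdb)⟩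
            rw [hrzero t ht] at this
            simpa using this), intervalIntegral.integral_zero]
      have hadd2 := intervalIntegral.integral_add_adjacent_intervals
        (hfint a c haIcc hcIcc) (hfint c d hcIcc hdIcc)
      exact hcaseleft (by linarith [hGf c hcIcc, hGf d hdIcc, hadd2, hintcd, hGd])
end

section
/- Suppose r > 0 on (a,c), r ≡ 0 on [c,d], r < 0 on (d,b), and y = φ + iψ is a nontrivial non-real eigenfunction of -y'' + q y = λ r y with y(a) = y(b) = 0, Im λ ≠ 0. If x₁ < x₂ are consecutive zeros of φ in (a,b), then ψ(x₁) ≠ 0 and ψ(x₂) ≠ 0, and ψ has exactly one zero in (x₁, x₂). -/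
open Set Filter Topology

lemma deriv2 {y : ℝ → ℂ} {x : ℝ} (h : ContDiffAt ℝ 2 y x) :
    HasDerivAt (deriv y) (deriv (deriv y) x) x := by
  obtain ⟨u, hu, hy⟩ := h.contDiffOn (le_refl 2) (by simp)
  obtain ⟨t, htu, hto, hxt⟩ := mem_nhds_iff.mp hu
  have h1 : ContDiffOn ℝ 1 (deriv y) t :=
    (hy.mono htu).deriv_of_isOpen hto (by norm_num)
  exact ((h1.differentiableOn one_ne_zero).differentiableAt (hto.mem_nhds hxt)).hasDerivAt

lemma deriv1 {y : ℝ → ℂ} {x : ℝ} (h : ContDiffAt ℝ 2 y x) :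
    HasDerivAt y (deriv y x) x :=
  (h.differentiableAt (by norm_num)).hasDerivAt

lemma gron {f f' f'' : ℝ → ℂ} {p q C : ℝ} (hpq : p ≤ q)
    (h1 : ∀ x ∈ Icc p q, HasDerivAt f (f' x) x)
    (h2 : ∀ x ∈ Icc p q, HasDerivAt f' (f'' x) x)
    (hC : ∀ x ∈ Icc p q, ‖f'' x‖ ≤ C * ‖f x‖)
    (h0 : f p = 0) (h0' : f' p = 0) : ∀ x ∈ Icc p q, f x = 0 := by
  set K := max C 1 with hKdef
  have hK1 : (1:ℝ) ≤ K := le_max_right _ _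
  have key : ∀ x ∈ Icc p q, ‖(f x, f' x)‖ ≤ gronwallBound 0 K 0 (x - p) := by
    apply norm_le_gronwallBound_of_norm_deriv_right_le
      (f := fun t => (f t, f' t)) (f' := fun t => (f' t, f'' t))
    · intro x hx
      exact ((h1 x hx).continuousAt.prodMk (h2 x hx).continuousAt).continuousWithinAt
    · intro x hx
      exact (((h1 x (Ico_subset_Icc_self hx)).prodMk
        (h2 x (Ico_subset_Icc_self hx))).hasDerivWithinAt)
    · simp [h0, h0', Prod.norm_def]
    · intro x hx
      have hx' := Ico_subset_Icc_self hx
      rw [Prod.norm_def, Prod.norm_def]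
      have hb1 : ‖f' x‖ ≤ K * max ‖f x‖ ‖f' x‖ := by
        calc ‖f' x‖ ≤ max ‖f x‖ ‖f' x‖ := le_max_right _ _
        _ ≤ K * max ‖f x‖ ‖f' x‖ := by nlinarith [norm_nonneg (f x), norm_nonneg (f' x), le_max_left ‖f x‖ ‖f' x‖]
      have hb2 : ‖f'' x‖ ≤ K * max ‖f x‖ ‖f' x‖ := by
        calc ‖f'' x‖ ≤ C * ‖f x‖ := hC x hx'
        _ ≤ K * max ‖f x‖ ‖f' x‖ := by
            have := le_max_left ‖f x‖ ‖f' x‖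
            nlinarith [norm_nonneg (f x), norm_nonneg (f' x), le_max_left C (1:ℝ)]
      simpa using max_le hb1 hb2
  intro x hx
  have := key x hx
  rw [gronwallBound_ε0_δ0] at this
  have : ‖f x‖ ≤ 0 := le_trans (by rw [Prod.norm_def]; exact le_max_left _ _) this
  simpa using le_antisymm this (norm_nonneg _)

lemma gronLeft {f f' f'' : ℝ → ℂ} {p q C : ℝ} (hpq : p ≤ q)
    (h1 : ∀ x ∈ Icc p q, HasDerivAt f (f' x) x)
    (h2 : ∀ x ∈ Icc p q, HasDerivAt f' (f'' x) x)
    (hC : ∀ x ∈ Icc p q, ‖f'' x‖ ≤ C * ‖f x‖)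
    (h0 : f q = 0) (h0' : f' q = 0) : ∀ x ∈ Icc p q, f x = 0 := by
  have hmem : ∀ t ∈ Icc p q, p + q - t ∈ Icc p q := by
    intro t ht; exact ⟨by linarith [ht.2], by linarith [ht.1]⟩
  have ha : ∀ t : ℝ, HasDerivAt (fun s => p + q - s) (-1 : ℝ) t := by
    intro t; simpa using (hasDerivAt_id t).const_sub (p + q)
  have key : ∀ t ∈ Icc p q, f (p + q - t) = 0 := by
    apply gron (f' := fun t => -(f' (p + q - t))) (f'' := fun t => f'' (p + q - t))
      (C := C) hpq
    · intro t ht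
      have := HasDerivAt.scomp t (h1 _ (hmem t ht)) (ha t)
      simpa [mul_comm, Function.comp_def] using this
    · intro t ht
      have := (HasDerivAt.scomp t (h2 _ (hmem t ht)) (ha t)).neg
      simpa [mul_comm, Function.comp_def, Pi.neg_def] using this
    · intro t ht; simpa using hC _ (hmem t ht)
    · simpa using h0
    · simpa using h0'
  intro x hx
  have := key (p + q - x) (hmem x hx)
  simpa using this

lemma slope_left {f : ℝ → ℝ} {f' T u : ℝ} (h : HasDerivAt f f' T) (hu : u < T)
    (h0 : f T = 0) (hf : ∀ t ∈ Ico u T, f t ≤ 0) : 0 ≤ f' := by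
  have ht : Tendsto (slope f T) (𝓝[<] T) (𝓝 f') :=
    (hasDerivAt_iff_tendsto_slope.mp h).mono_left
      (nhdsWithin_mono _ (fun z hz => ne_of_lt hz))
  refine ge_of_tendsto ht ?_
  filter_upwards [Ioo_mem_nhdsLT_of_mem (⟨hu, le_refl T⟩ : T ∈ Ioc u T)] with t ht
  have hs : slope f T t = f t / (t - T) := by
    rw [slope_def_field, h0]; ring_nf
  rw [hs]
  exact div_nonneg_of_nonpos (hf t ⟨ht.1.le, ht.2⟩) (by linarith [ht.2] : t - T ≤ 0)

lemma slope_right {f : ℝ → ℝ} {f' T u : ℝ} (h : HasDerivAt f f' T) (hu : T < u)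
    (h0 : f T = 0) (hf : ∀ t ∈ Ioc T u, 0 ≤ f t) : 0 ≤ f' := by
  have ht : Tendsto (slope f T) (𝓝[>] T) (𝓝 f') :=
    (hasDerivAt_iff_tendsto_slope.mp h).mono_left
      (nhdsWithin_mono _ (fun z hz => ne_of_gt hz))
  refine ge_of_tendsto ht ?_
  filter_upwards [Ioo_mem_nhdsGT_of_mem (⟨le_refl T, hu⟩ : T ∈ Ico T u)] with t ht
  have hs : slope f T t = f t / (t - T) := by
    rw [slope_def_field, h0]; ring_nf
  rw [hs]
  exact div_nonneg (hf t ⟨ht.1, ht.2.le⟩) (by linarith [ht.1])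

lemma exists_neg_right {f : ℝ → ℝ} {f' s u : ℝ} (h : HasDerivAt f f' s) (hf' : f' < 0)
    (h0 : f s = 0) (hsu : s < u) : ∃ t ∈ Ioo s u, f t < 0 := by
  have ht : Tendsto (slope f s) (𝓝[>] s) (𝓝 f') :=
    (hasDerivAt_iff_tendsto_slope.mp h).mono_left
      (nhdsWithin_mono _ (fun z hz => ne_of_gt hz))
  have hev : ∀ᶠ t in 𝓝[>] s, slope f s t < 0 := ht.eventually_lt_const hf'
  have hmem : Ioo s u ∈ 𝓝[>] s := Ioo_mem_nhdsGT_of_mem ⟨le_refl s, hsu⟩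
  obtain ⟨t, hslope, htm⟩ := (hev.and (eventually_mem_set.mpr hmem)).exists
  refine ⟨t, htm, ?_⟩
  have hs : slope f s t = f t / (t - s) := by rw [slope_def_field, h0]; ring_nf
  rw [hs] at hslope
  have hts : 0 < t - s := by linarith [htm.1]
  nlinarith [div_mul_cancel₀ (f t) (ne_of_gt hts)]

lemma pos_of_ne {f : ℝ → ℝ} {p q m : ℝ} (cont : ContinuousOn f (Icc p q))
    (hne : ∀ t ∈ Ioo p q, f t ≠ 0) (hm : m ∈ Ioo p q) (hfm : 0 < f m) :
    ∀ t ∈ Ioo p q, 0 < f t := by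
  intro t ht
  rcases lt_or_ge 0 (f t) with h | h
  · exact h
  have hft : f t < 0 := lt_of_le_of_ne h (hne t ht)
  have hsub : uIcc t m ⊆ Ioo p q := by
    rw [uIcc_eq_union]
    rintro z (hz | hz)
    · exact ⟨lt_of_lt_of_le ht.1 hz.1, lt_of_le_of_lt hz.2 hm.2⟩
    · exact ⟨lt_of_lt_of_le hm.1 hz.1, lt_of_le_of_lt hz.2 ht.2⟩
  have hcont : ContinuousOn f (uIcc t m) :=
    cont.mono (hsub.trans (Ioo_subset_Icc_self))
  have h0 : (0:ℝ) ∈ uIcc (f t) (f m) := by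
    rw [mem_uIcc]; left; exact ⟨hft.le, hfm.le⟩
  obtain ⟨z, hz, hfz⟩ := intermediate_value_uIcc hcont h0
  exact absurd hfz (hne z (hsub hz))

lemma limit_zero {f : ℝ → ℂ} {p : ℝ} {l : Filter ℝ} [l.NeBot] (hl : l ≤ 𝓝 p)
    (hc : ContinuousAt f p) (h0 : ∀ᶠ x in l, f x = 0) : f p = 0 :=
  tendsto_nhds_unique (hc.tendsto.mono_left hl) (tendsto_const_nhds.congr' (by filter_upwards [h0] with x hx using hx.symm))
lemma core (x₁ x₂ : ℝ) (hlt : x₁ < x₂) (φ ψ φd ψd : ℝ → ℝ)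
    (dφ : ∀ x ∈ Icc x₁ x₂, HasDerivAt φ (φd x) x)
    (dψ : ∀ x ∈ Icc x₁ x₂, HasDerivAt ψ (ψd x) x)
    (hz₁ : φ x₁ = 0) (hz₂ : φ x₂ = 0)
    (hpos : ∀ t ∈ Ioo x₁ x₂, 0 < φ t)
    (hW : ∀ s ∈ Icc x₁ x₂, 0 < φd s * ψ s - φ s * ψd s) :
    ψ x₁ ≠ 0 ∧ ψ x₂ ≠ 0 ∧ ∃! s, s ∈ Ioo x₁ x₂ ∧ ψ s = 0 := by
  have hx₁ : x₁ ∈ Icc x₁ x₂ := ⟨le_refl _, hlt.le⟩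
  have hx₂ : x₂ ∈ Icc x₁ x₂ := ⟨hlt.le, le_refl _⟩
  have hW₁ : 0 < φd x₁ * ψ x₁ := by simpa [hz₁] using hW x₁ hx₁
  have hW₂ : 0 < φd x₂ * ψ x₂ := by simpa [hz₂] using hW x₂ hx₂
  have hφd₁ : 0 ≤ φd x₁ :=
    slope_right (dφ x₁ hx₁) hlt hz₁
      (fun t ht => by
        rcases eq_or_lt_of_le ht.2 with rfl | h
        · exact hz₂.ge
        · exact (hpos t ⟨ht.1, h⟩).le)
  have hφd₁' : 0 < φd x₁ := by
    rcases eq_or_lt_of_le hφd₁ with h | h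
    · exfalso; rw [← h] at hW₁; simpa using hW₁
    · exact h
  have hψ₁ : 0 < ψ x₁ := by nlinarith
  have hφd₂ : φd x₂ ≤ 0 := by
    have := slope_left (f := fun t => -φ t) ((dφ x₂ hx₂).neg) hlt (by simp [hz₂])
      (fun t ht => by
        rcases eq_or_lt_of_le ht.1 with rfl | h
        · simp [hz₁]
        · simp [(hpos t ⟨h, ht.2⟩).le])
    linarith
  have hφd₂' : φd x₂ < 0 := by
    rcases eq_or_lt_of_le hφd₂ with h | h
    · exfalso; rw [h] at hW₂; simpa using hW₂
    · exact h
  have hψ₂ : ψ x₂ < 0 := by nlinarith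
  have hψcont : ContinuousOn ψ (Icc x₁ x₂) :=
    fun x hx => ((dψ x hx).continuousAt).continuousWithinAt
  obtain ⟨s, hs, hψs⟩ : ∃ s ∈ Ioo x₁ x₂, ψ s = 0 := by
    have h := intermediate_value_Ioo' hlt.le hψcont
    have h0 : (0:ℝ) ∈ Ioo (ψ x₂) (ψ x₁) := ⟨hψ₂, hψ₁⟩
    obtain ⟨s, hsm, hval⟩ := h h0
    exact ⟨s, hsm, hval⟩
  have hzero_deriv : ∀ t ∈ Ioo x₁ x₂, ψ t = 0 → ψd t < 0 := by
    intro t ht h0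
    have hw := hW t (Ioo_subset_Icc_self ht)
    rw [h0] at hw
    have hφt := hpos t ht
    nlinarith
  have key : ∀ s₁ s₂, s₁ ∈ Ioo x₁ x₂ → s₂ ∈ Ioo x₁ x₂ → s₁ < s₂ →
      ψ s₁ = 0 → ψ s₂ = 0 → False := by
    intro s₁ s₂ h1 h2 h12 hzz1 hzz2
    have hd1 : ψd s₁ < 0 := hzero_deriv _ h1 hzz1
    obtain ⟨u, hu, hψu⟩ := exists_neg_right
      (dψ s₁ (Ioo_subset_Icc_self h1)) hd1 hzz1 h12
    set S := Icc u s₂ ∩ ψ ⁻¹' {0} with hSdef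
    have hsub : Icc u s₂ ⊆ Icc x₁ x₂ := fun z hz =>
      ⟨le_trans (le_trans h1.1.le hu.1.le) hz.1, le_trans hz.2 h2.2.le⟩
    have hScl : IsClosed S := by
      apply (hψcont.mono hsub).preimage_isClosed_of_isClosed isClosed_Icc isClosed_singleton
    have hScpt : IsCompact S :=
      isCompact_Icc.of_isClosed_subset hScl inter_subset_left
    have hSne : S.Nonempty := ⟨s₂, ⟨⟨hu.2.le, le_refl _⟩, hzz2⟩⟩
    set T := sInf S with hTdef
    have hTS : T ∈ S := hScpt.sInf_mem hSne
    have hTz : ψ T = 0 := hTS.2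
    have hTu : u < T := by
      rcases eq_or_lt_of_le hTS.1.1 with h | h
      · exfalso; rw [h, hTz] at hψu; exact absurd hψu (lt_irrefl 0)
      · exact h
    have hTmem : T ∈ Ioo x₁ x₂ :=
      ⟨lt_trans h1.1 (lt_trans hu.1 hTu), lt_of_le_of_lt hTS.1.2 h2.2⟩
    have hnozero : ∀ z ∈ Ico u T, ψ z ≠ 0 := by
      intro z hz hψz
      have hzS : z ∈ S := ⟨⟨hz.1, le_trans hz.2.le hTS.1.2⟩, hψz⟩
      exact absurd (csInf_le hScpt.bddBelow hzS) (not_le.mpr hz.2)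
    have hneg : ∀ z ∈ Ico u T, ψ z < 0 := by
      intro z hz
      rcases lt_or_ge (ψ z) 0 with h | h
      · exact h
      exfalso
      have hzpos : 0 < ψ z := lt_of_le_of_ne h (Ne.symm (hnozero z hz))
      have hcontz : ContinuousOn ψ (Icc u z) :=
        hψcont.mono (fun w hw => hsub ⟨hw.1, le_trans hw.2 (le_trans hz.2.le hTS.1.2)⟩)
      have h0m : (0:ℝ) ∈ Icc (ψ u) (ψ z) := ⟨hψu.le, hzpos.le⟩
      obtain ⟨w, hw, hw0⟩ := intermediate_value_Icc hz.1 hcontz h0m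
      exact hnozero w ⟨hw.1, lt_of_le_of_lt hw.2 hz.2⟩ hw0
    have hge : 0 ≤ ψd T :=
      slope_left (dψ T (Ioo_subset_Icc_self hTmem)) hTu hTz
        (fun z hz => (hneg z hz).le)
    exact absurd (hzero_deriv T hTmem hTz) (not_lt.mpr hge)
  refine ⟨ne_of_gt hψ₁, ne_of_lt hψ₂, s, ⟨hs, hψs⟩, ?_⟩
  rintro t ⟨ht, hψt⟩
  by_contra hne
  rcases lt_or_gt_of_ne hne with h | h
  · exact key t s ht hs h hψt hψs
  · exact key s t hs ht h hψs hψt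

lemma core2 (x₁ x₂ : ℝ) (hlt : x₁ < x₂) (φ ψ φd ψd : ℝ → ℝ) (e₁ e₂ : ℝ) (he₂ : e₂ ≠ 0)
    (dφ : ∀ x ∈ Icc x₁ x₂, HasDerivAt φ (φd x) x)
    (dψ : ∀ x ∈ Icc x₁ x₂, HasDerivAt ψ (ψd x) x)
    (hz₁ : φ x₁ = 0) (hz₂ : φ x₂ = 0)
    (hpos : ∀ t ∈ Ioo x₁ x₂, 0 < e₁ * φ t)
    (hW : ∀ s ∈ Icc x₁ x₂, 0 < e₁ * e₂ * (φd s * ψ s - φ s * ψd s)) :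
    ψ x₁ ≠ 0 ∧ ψ x₂ ≠ 0 ∧ ∃! s, s ∈ Ioo x₁ x₂ ∧ ψ s = 0 := by
  obtain ⟨h1, h2, h3⟩ := core x₁ x₂ hlt (fun t => e₁ * φ t) (fun t => e₂ * ψ t)
    (fun t => e₁ * φd t) (fun t => e₂ * ψd t)
    (fun x hx => (dφ x hx).const_mul e₁)
    (fun x hx => (dψ x hx).const_mul e₂)
    (by simp [hz₁]) (by simp [hz₂]) hpos
    (fun s hs => by have := hW s hs; show 0 < e₁ * φd s * (e₂ * ψ s) - e₁ * φ s * (e₂ * ψd s); nlinarith)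
  have hmul : ∀ t : ℝ, e₂ * ψ t = 0 ↔ ψ t = 0 := by
    intro t
    constructor
    · intro h; rcases mul_eq_zero.mp h with h | h
      · exact absurd h he₂
      · exact h
    · intro h; rw [h, mul_zero]
  refine ⟨fun h => h1 (by rw [h, mul_zero]), fun h => h2 (by rw [h, mul_zero]), ?_⟩
  obtain ⟨s, ⟨hs, hψs⟩, huniq⟩ := h3
  exact ⟨s, ⟨hs, (hmul s).mp hψs⟩, fun t ⟨ht, hψt⟩ => huniq t ⟨ht, (hmul t).mpr hψt⟩⟩
theorem stmt_17 (a b c d : ℝ) (hac : a < c) (hcd : c ≤ d) (hdb : d < b)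
    (q r : ℝ → ℝ) (lam : ℂ) (hlam : lam.im ≠ 0)
    (hq : ContinuousOn q (Set.Icc a b))
    (hrpos : ∀ x ∈ Set.Ioo a c, 0 < r x)
    (hrzero : ∀ x ∈ Set.Icc c d, r x = 0)
    (hrneg : ∀ x ∈ Set.Ioo d b, r x < 0)
    (hrcont1 : ContinuousOn r (Set.Ioo a c)) (hrcont2 : ContinuousOn r (Set.Ioo d b))
    (y : ℝ → ℂ) (φ ψ : ℝ → ℝ)
    (hφ : ∀ x, φ x = (y x).re) (hψ : ∀ x, ψ x = (y x).im)
    (hsmooth : ∀ x ∈ Set.Icc a b, ContDiffAt ℝ 2 y x)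
    (hode : ∀ x ∈ Set.Icc a b,
      -(deriv (deriv y) x) + (q x : ℂ) * y x = lam * (r x : ℂ) * y x)
    (hya : y a = 0) (hyb : y b = 0)
    (hnontriv : ∃ x ∈ Set.Icc a b, y x ≠ 0)
    (x₁ x₂ : ℝ) (hx₁ : x₁ ∈ Set.Ioo a b) (hx₂ : x₂ ∈ Set.Ioo a b) (hlt : x₁ < x₂)
    (hz₁ : φ x₁ = 0) (hz₂ : φ x₂ = 0)
    (hconsec : ∀ x ∈ Set.Ioo x₁ x₂, φ x ≠ 0) :
    ψ x₁ ≠ 0 ∧ ψ x₂ ≠ 0 ∧ ∃! s, s ∈ Set.Ioo x₁ x₂ ∧ ψ s = 0 := by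
  clear hnontriv
  have hcb : c < b := lt_of_le_of_lt hcd hdb
  have had : a < d := lt_of_lt_of_le hac hcd
  have hab : a < b := lt_trans hac hcb
  have hy1 : ∀ x ∈ Icc a b, HasDerivAt y (deriv y x) x := fun x hx => deriv1 (hsmooth x hx)
  have hy2 : ∀ x ∈ Icc a b, HasDerivAt (deriv y) (deriv (deriv y) x) x :=
    fun x hx => deriv2 (hsmooth x hx)
  have hode2 : ∀ x ∈ Icc a b, deriv (deriv y) x = ((q x : ℂ) - lam * r x) * y x := by
    intro x hx; linear_combination -(hode x hx)
  set W : ℝ → ℝ := fun x => (deriv y x).re * (y x).im - (y x).re * (deriv y x).im with hWdef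
  have hWderiv : ∀ x ∈ Icc a b, HasDerivAt W (lam.im * (r x * Complex.normSq (y x))) x := by
    intro x hx
    have h1 := hy1 x hx
    have h2 := hy2 x hx
    have hre : HasDerivAt (fun t => (y t).re) ((deriv y x).re) x := by
      simpa [Function.comp_def] using Complex.reCLM.hasFDerivAt.comp_hasDerivAt x h1
    have him : HasDerivAt (fun t => (y t).im) ((deriv y x).im) x := by
      simpa [Function.comp_def] using Complex.imCLM.hasFDerivAt.comp_hasDerivAt x h1
    have hre' : HasDerivAt (fun t => (deriv y t).re) ((deriv (deriv y) x).re) x := by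
      simpa [Function.comp_def] using Complex.reCLM.hasFDerivAt.comp_hasDerivAt x h2
    have him' : HasDerivAt (fun t => (deriv y t).im) ((deriv (deriv y) x).im) x := by
      simpa [Function.comp_def] using Complex.imCLM.hasFDerivAt.comp_hasDerivAt x h2
    have H := (hre'.mul him).sub (hre.mul him')
    have heq : (deriv (deriv y) x).re * (y x).im + (deriv y x).re * (deriv y x).im -
        ((deriv y x).re * (deriv y x).im + (y x).re * (deriv (deriv y) x).im)
        = lam.im * (r x * Complex.normSq (y x)) := by
      rw [hode2 x hx]
      simp [Complex.mul_re, Complex.mul_im, Complex.sub_re, Complex.sub_im,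
        Complex.normSq_apply]
      ring
    rw [heq] at H
    exact H
  set g : ℝ → ℝ := fun x => W x / lam.im with hgdef
  have hgderiv : ∀ x ∈ Icc a b, HasDerivAt g (r x * Complex.normSq (y x)) x := by
    intro x hx
    have H := (hWderiv x hx).div_const lam.im
    have heq : lam.im * (r x * Complex.normSq (y x)) / lam.im = r x * Complex.normSq (y x) := by
      field_simp
    rwa [heq] at H
  have hga : g a = 0 := by simp [hgdef, hWdef, hya]
  have hgb : g b = 0 := by simp [hgdef, hWdef, hyb]
  have hgcont : ContinuousOn g (Icc a b) :=
    fun x hx => ((hgderiv x hx).continuousAt).continuousWithinAt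
  have hsub1 : Icc a c ⊆ Icc a b := Icc_subset_Icc (le_refl a) hcb.le
  have hsub2 : Icc c d ⊆ Icc a b := Icc_subset_Icc hac.le hdb.le
  have hsub3 : Icc d b ⊆ Icc a b := Icc_subset_Icc had.le (le_refl b)
  have mono1 : MonotoneOn g (Icc a c) := by
    apply monotoneOn_of_deriv_nonneg (convex_Icc a c) (hgcont.mono hsub1)
    · intro x hx
      rw [interior_Icc] at hx
      exact ((hgderiv x (hsub1 (Ioo_subset_Icc_self hx))).differentiableAt).differentiableWithinAt
    · intro x hx
      rw [interior_Icc] at hx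
      rw [(hgderiv x (hsub1 (Ioo_subset_Icc_self hx))).deriv]
      exact mul_nonneg (hrpos x hx).le (Complex.normSq_nonneg _)
  have anti3 : AntitoneOn g (Icc d b) := by
    apply antitoneOn_of_deriv_nonpos (convex_Icc d b) (hgcont.mono hsub3)
    · intro x hx
      rw [interior_Icc] at hx
      exact ((hgderiv x (hsub3 (Ioo_subset_Icc_self hx))).differentiableAt).differentiableWithinAt
    · intro x hx
      rw [interior_Icc] at hx
      rw [(hgderiv x (hsub3 (Ioo_subset_Icc_self hx))).deriv]
      nlinarith [Complex.normSq_nonneg (y x), hrneg x hx]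
  have const2 : ∀ x ∈ Icc c d, g x = g c ∧ g x = g d := by
    have mono : MonotoneOn g (Icc c d) := by
      apply monotoneOn_of_deriv_nonneg (convex_Icc c d) (hgcont.mono hsub2)
      · intro x hx
        rw [interior_Icc] at hx
        exact ((hgderiv x (hsub2 (Ioo_subset_Icc_self hx))).differentiableAt).differentiableWithinAt
      · intro x hx
        rw [interior_Icc] at hx
        rw [(hgderiv x (hsub2 (Ioo_subset_Icc_self hx))).deriv,
          hrzero x (Ioo_subset_Icc_self hx), zero_mul]
    have anti : AntitoneOn g (Icc c d) := by
      apply antitoneOn_of_deriv_nonpos (convex_Icc c d) (hgcont.mono hsub2)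
      · intro x hx
        rw [interior_Icc] at hx
        exact ((hgderiv x (hsub2 (Ioo_subset_Icc_self hx))).differentiableAt).differentiableWithinAt
      · intro x hx
        rw [interior_Icc] at hx
        rw [(hgderiv x (hsub2 (Ioo_subset_Icc_self hx))).deriv,
          hrzero x (Ioo_subset_Icc_self hx), zero_mul]
    intro x hx
    have hcm : c ∈ Icc c d := ⟨le_refl c, hcd⟩
    have hdm : d ∈ Icc c d := ⟨hcd, le_refl d⟩
    exact ⟨le_antisymm (anti hcm hx hx.1) (mono hcm hx hx.1),
      le_antisymm (mono hx hdm hx.2) (anti hx hdm hx.2)⟩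
  have hgnonneg : ∀ x ∈ Icc a b, 0 ≤ g x := by
    intro x hx
    rcases le_or_gt x c with hxc | hcx
    · have h := mono1 ⟨le_refl a, hac.le⟩ ⟨hx.1, hxc⟩ hx.1
      rwa [hga] at h
    rcases le_or_gt x d with hxd | hdx
    · have h1 := (const2 x ⟨hcx.le, hxd⟩).2
      have h2 := anti3 ⟨le_refl d, hdb.le⟩ ⟨hdb.le, le_refl b⟩ hdb.le
      rw [hgb] at h2
      rw [h1]; linarith
    · have h := anti3 ⟨hdx.le, hx.2⟩ ⟨hdb.le, le_refl b⟩ hx.2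
      rwa [hgb] at h
  have prop1 : ∀ t, a < t → t ≤ c → g t = 0 → ∀ x ∈ Ioo a t, y x = 0 := by
    intro t hat htc hgt x hx
    have hzero : ∀ z ∈ Icc a t, g z = 0 := by
      intro z hz
      have hzac : z ∈ Icc a c := ⟨hz.1, hz.2.trans htc⟩
      have h1 : g a ≤ g z := mono1 ⟨le_refl a, hac.le⟩ hzac hz.1
      have h2 : g z ≤ g t := mono1 hzac ⟨hat.le, htc⟩ hz.2
      rw [hga] at h1; rw [hgt] at h2; linarith
    have hx' : x ∈ Icc a b := ⟨hx.1.le, ((hx.2.trans_le htc).trans hcb).le⟩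
    have hconst : HasDerivAt g 0 x := by
      have hev : g =ᶠ[𝓝 x] (fun _ => 0) := by
        filter_upwards [isOpen_Ioo.mem_nhds hx] with z hz
        exact hzero z ⟨hz.1.le, hz.2.le⟩
      exact (hasDerivAt_const x (0:ℝ)).congr_of_eventuallyEq hev
    have huniq := (hgderiv x hx').unique hconst
    have hr := hrpos x ⟨hx.1, hx.2.trans_le htc⟩
    exact Complex.normSq_eq_zero.mp
      ((mul_eq_zero.mp huniq).resolve_left (ne_of_gt hr))
  have prop3 : ∀ t, d ≤ t → t < b → g t = 0 → ∀ x ∈ Ioo t b, y x = 0 := by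
    intro t hdt htb hgt x hx
    have hzero : ∀ z ∈ Icc t b, g z = 0 := by
      intro z hz
      have hzdb : z ∈ Icc d b := ⟨hdt.trans hz.1, hz.2⟩
      have h1 : g z ≤ g t := anti3 ⟨hdt, htb.le⟩ hzdb hz.1
      have h2 : g b ≤ g z := anti3 hzdb ⟨hdb.le, le_refl b⟩ hz.2
      rw [hgb] at h2; rw [hgt] at h1; linarith
    have hx' : x ∈ Icc a b := ⟨(((had.trans_le hdt)).trans hx.1).le, hx.2.le⟩
    have hconst : HasDerivAt g 0 x := by
      have hev : g =ᶠ[𝓝 x] (fun _ => 0) := by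
        filter_upwards [isOpen_Ioo.mem_nhds hx] with z hz
        exact hzero z ⟨hz.1.le, hz.2.le⟩
      exact (hasDerivAt_const x (0:ℝ)).congr_of_eventuallyEq hev
    have huniq := (hgderiv x hx').unique hconst
    have hr := hrneg x ⟨hdt.trans_lt hx.1, hx.2⟩
    exact Complex.normSq_eq_zero.mp
      ((mul_eq_zero.mp huniq).resolve_left (ne_of_lt hr))
  have contra : ∀ t ∈ Ioo x₁ x₂, y t = 0 → False := by
    intro t ht h0
    exact hconsec t ht (by rw [hφ t, h0]; simp)
  obtain ⟨Cq, hCq⟩ := isCompact_Icc.exists_bound_of_continuousOn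
    (Complex.continuous_ofReal.comp_continuousOn hq)
  have derzero : ∀ (u v : ℝ), (∀ z ∈ Ioo u v, y z = 0) → ∀ x ∈ Ioo u v, deriv y x = 0 := by
    intro u v h0 x hx
    have hev : y =ᶠ[𝓝 x] (fun _ => 0) := by
      filter_upwards [isOpen_Ioo.mem_nhds hx] with z hz using h0 z hz
    rw [hev.deriv_eq]; exact deriv_const x 0
  have POS : ∀ s ∈ Icc x₁ x₂, 0 < g s := by
    intro s hs
    by_contra hcon
    have hsI : s ∈ Icc a b := ⟨hx₁.1.le.trans hs.1, hs.2.trans hx₂.2.le⟩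
    have hs0 : g s = 0 := le_antisymm (not_lt.mp hcon) (hgnonneg s hsI)
    rcases lt_or_ge s c with hsc | hcs
    · -- s < c
      have hy0 : ∀ x ∈ Ioo a s, y x = 0 :=
        prop1 s (hx₁.1.trans_le hs.1) hsc.le hs0
      rcases eq_or_lt_of_le hs.1 with heq | hlt'
      · -- x₁ = s : Gronwall to the right
        rw [← heq] at hy0 hsc hsI
        have hx₁I : x₁ ∈ Icc a b := hsI
        have hyx₁ : y x₁ = 0 := by
          apply limit_zero (l := 𝓝[<] x₁) nhdsWithin_le_nhds (hy1 x₁ hx₁I).continuousAt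
          filter_upwards [Ioo_mem_nhdsLT_of_mem (⟨hx₁.1, le_refl x₁⟩ : x₁ ∈ Ioc a x₁)] with z hz
          exact hy0 z hz
        have hy'x₁ : deriv y x₁ = 0 := by
          apply limit_zero (l := 𝓝[<] x₁) nhdsWithin_le_nhds (hy2 x₁ hx₁I).continuousAt
          filter_upwards [Ioo_mem_nhdsLT_of_mem (⟨hx₁.1, le_refl x₁⟩ : x₁ ∈ Ioc a x₁)] with z hz
          exact derzero a x₁ hy0 z hz
        set m := min ((x₁ + c)/2) ((x₁ + x₂)/2) with hmdef
        have hm1 : x₁ < m := lt_min (by linarith) (by linarith)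
        have hm2 : m < c := (min_le_left _ _).trans_lt (by linarith)
        have hm3 : m < x₂ := (min_le_right _ _).trans_lt (by linarith)
        have hsubm : Icc x₁ m ⊆ Icc a b := fun z hz =>
          ⟨hx₁.1.le.trans hz.1, hz.2.trans (by linarith : m ≤ b)⟩
        have hsubm2 : Icc x₁ m ⊆ Ioo a c := fun z hz =>
          ⟨hx₁.1.trans_le hz.1, hz.2.trans_lt hm2⟩
        have hcoef : ContinuousOn (fun x => ((q x : ℂ) - lam * r x)) (Icc x₁ m) :=
          (Complex.continuous_ofReal.comp_continuousOn (hq.mono hsubm)).sub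
            (continuousOn_const.mul
              (Complex.continuous_ofReal.comp_continuousOn (hrcont1.mono hsubm2)))
        obtain ⟨C, hC⟩ := isCompact_Icc.exists_bound_of_continuousOn hcoef
        have hgr := gron (f := y) (f' := deriv y) (f'' := deriv (deriv y)) hm1.le
          (fun x hx => hy1 x (hsubm hx)) (fun x hx => hy2 x (hsubm hx))
          (fun x hx => by
            rw [hode2 x (hsubm hx), norm_mul]
            exact mul_le_mul_of_nonneg_right (hC x hx) (norm_nonneg _))
          hyx₁ hy'x₁
        exact contra ((x₁ + m)/2) ⟨by linarith, by linarith⟩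
          (hgr _ ⟨by linarith, by linarith⟩)
      · -- x₁ < s
        exact contra ((x₁ + s)/2) ⟨by linarith, by linarith [hs.2]⟩
          (hy0 _ ⟨by linarith [hx₁.1], by linarith⟩)
    rcases le_or_gt s d with hsd | hds
    · -- c ≤ s ≤ d
      have hgc0 : g c = 0 := by
        have h := (const2 s ⟨hcs, hsd⟩).1; rw [hs0] at h; exact h.symm
      have hgd0 : g d = 0 := by
        have h := (const2 s ⟨hcs, hsd⟩).2; rw [hs0] at h; exact h.symm
      have hy0l : ∀ x ∈ Ioo a c, y x = 0 := prop1 c hac (le_refl c) hgc0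
      have hy0r : ∀ x ∈ Ioo d b, y x = 0 := prop3 d (le_refl d) hdb hgd0
      rcases lt_or_ge x₁ c with h1c | hc1
      · have hcx₂ : c ≤ x₂ := hcs.trans hs.2
        exact contra ((x₁ + c)/2) ⟨by linarith, by linarith⟩
          (hy0l _ ⟨by linarith [hx₁.1], by linarith⟩)
      rcases lt_or_ge d x₂ with hd2 | h2d
      · have hx₁d : x₁ ≤ d := hs.1.trans hsd
        exact contra ((d + x₂)/2) ⟨by linarith, by linarith⟩
          (hy0r _ ⟨by linarith, by linarith [hx₂.2]⟩)
      · -- c ≤ x₁ < x₂ ≤ d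
        have hcI : c ∈ Icc a b := ⟨hac.le, hcb.le⟩
        have hyc : y c = 0 := by
          apply limit_zero (l := 𝓝[<] c) nhdsWithin_le_nhds (hy1 c hcI).continuousAt
          filter_upwards [Ioo_mem_nhdsLT_of_mem (⟨hac, le_refl c⟩ : c ∈ Ioc a c)] with z hz
          exact hy0l z hz
        have hy'c : deriv y c = 0 := by
          apply limit_zero (l := 𝓝[<] c) nhdsWithin_le_nhds (hy2 c hcI).continuousAt
          filter_upwards [Ioo_mem_nhdsLT_of_mem (⟨hac, le_refl c⟩ : c ∈ Ioc a c)] with z hz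
          exact derzero a c hy0l z hz
        have hgr := gron (f := y) (f' := deriv y) (f'' := deriv (deriv y)) (C := Cq) hcd
          (fun x hx => hy1 x (hsub2 hx)) (fun x hx => hy2 x (hsub2 hx))
          (fun x hx => by
            rw [hode2 x (hsub2 hx), hrzero x hx]
            rw [Complex.ofReal_zero, mul_zero, sub_zero, norm_mul]
            exact mul_le_mul_of_nonneg_right (hCq x (hsub2 hx)) (norm_nonneg _))
          hyc hy'c
        exact contra ((x₁ + x₂)/2) ⟨by linarith, by linarith⟩
          (hgr _ ⟨by linarith [hc1], by linarith [h2d]⟩)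
    · -- d < s
      have hy0 : ∀ x ∈ Ioo s b, y x = 0 :=
        prop3 s hds.le (hs.2.trans_lt hx₂.2) hs0
      rcases eq_or_lt_of_le hs.2 with heq | hlt'
      · -- s = x₂ : Gronwall to the left
        rw [heq] at hy0 hds hsI
        have hx₂I : x₂ ∈ Icc a b := hsI
        have hyx₂ : y x₂ = 0 := by
          apply limit_zero (l := 𝓝[>] x₂) nhdsWithin_le_nhds (hy1 x₂ hx₂I).continuousAt
          filter_upwards [Ioo_mem_nhdsGT_of_mem (⟨le_refl x₂, hx₂.2⟩ : x₂ ∈ Ico x₂ b)] with z hz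
          exact hy0 z hz
        have hy'x₂ : deriv y x₂ = 0 := by
          apply limit_zero (l := 𝓝[>] x₂) nhdsWithin_le_nhds (hy2 x₂ hx₂I).continuousAt
          filter_upwards [Ioo_mem_nhdsGT_of_mem (⟨le_refl x₂, hx₂.2⟩ : x₂ ∈ Ico x₂ b)] with z hz
          exact derzero x₂ b hy0 z hz
        set m := max ((d + x₂)/2) ((x₁ + x₂)/2) with hmdef
        have hm1 : m < x₂ := max_lt (by linarith) (by linarith)
        have hm2 : d < m := lt_of_lt_of_le (by linarith : d < (d + x₂)/2) (le_max_left _ _)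
        have hm3 : x₁ < m := lt_of_lt_of_le (by linarith : x₁ < (x₁ + x₂)/2) (le_max_right _ _)
        have hsubm : Icc m x₂ ⊆ Icc a b := fun z hz =>
          ⟨((had.trans hm2).trans_le hz.1).le, hz.2.trans hx₂.2.le⟩
        have hsubm2 : Icc m x₂ ⊆ Ioo d b := fun z hz =>
          ⟨hm2.trans_le hz.1, hz.2.trans_lt hx₂.2⟩
        have hcoef : ContinuousOn (fun x => ((q x : ℂ) - lam * r x)) (Icc m x₂) :=
          (Complex.continuous_ofReal.comp_continuousOn (hq.mono hsubm)).sub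
            (continuousOn_const.mul
              (Complex.continuous_ofReal.comp_continuousOn (hrcont2.mono hsubm2)))
        obtain ⟨C, hC⟩ := isCompact_Icc.exists_bound_of_continuousOn hcoef
        have hgr := gronLeft (f := y) (f' := deriv y) (f'' := deriv (deriv y)) hm1.le
          (fun x hx => hy1 x (hsubm hx)) (fun x hx => hy2 x (hsubm hx))
          (fun x hx => by
            rw [hode2 x (hsubm hx), norm_mul]
            exact mul_le_mul_of_nonneg_right (hC x hx) (norm_nonneg _))
          hyx₂ hy'x₂
        exact contra ((m + x₂)/2) ⟨by linarith, by linarith⟩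
          (hgr _ ⟨by linarith, by linarith⟩)
      · -- s < x₂
        exact contra ((s + x₂)/2) ⟨by linarith [hs.1], by linarith⟩
          (hy0 _ ⟨by linarith, by linarith [hx₂.2]⟩)
  -- Sturm-type argument
  have hsubx : Icc x₁ x₂ ⊆ Icc a b := fun z hz =>
    ⟨hx₁.1.le.trans hz.1, hz.2.trans hx₂.2.le⟩
  have hφfun : φ = fun t => (y t).re := funext hφ
  have hψfun : ψ = fun t => (y t).im := funext hψ
  have dφ : ∀ x ∈ Icc x₁ x₂, HasDerivAt φ ((deriv y x).re) x := by
    intro x hx; rw [hφfun]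
    simpa [Function.comp_def] using Complex.reCLM.hasFDerivAt.comp_hasDerivAt x (hy1 x (hsubx hx))
  have dψ : ∀ x ∈ Icc x₁ x₂, HasDerivAt ψ ((deriv y x).im) x := by
    intro x hx; rw [hψfun]
    simpa [Function.comp_def] using Complex.imCLM.hasFDerivAt.comp_hasDerivAt x (hy1 x (hsubx hx))
  have hWeq : ∀ s : ℝ, (deriv y s).re * ψ s - φ s * (deriv y s).im = W s := by
    intro s; rw [hφ s, hψ s]
  have hWg : ∀ s : ℝ, W s = lam.im * g s := by
    intro s
    have : lam.im * (W s / lam.im) = W s := by field_simp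
    rw [hgdef]; exact this.symm
  have hmid : (x₁ + x₂)/2 ∈ Ioo x₁ x₂ := ⟨by linarith, by linarith⟩
  have hφm := hconsec _ hmid
  have hφcont : ContinuousOn φ (Icc x₁ x₂) :=
    fun x hx => ((dφ x hx).continuousAt).continuousWithinAt
  have happ : ∀ e₁ e₂ : ℝ, e₂ ≠ 0 → (∀ t ∈ Ioo x₁ x₂, 0 < e₁ * φ t) →
      (∀ s ∈ Icc x₁ x₂, 0 < e₁ * e₂ * W s) →
      ψ x₁ ≠ 0 ∧ ψ x₂ ≠ 0 ∧ ∃! s, s ∈ Ioo x₁ x₂ ∧ ψ s = 0 := by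
    intro e₁ e₂ he₂ hp hw
    apply core2 x₁ x₂ hlt φ ψ (fun x => (deriv y x).re) (fun x => (deriv y x).im)
      e₁ e₂ he₂ dφ dψ hz₁ hz₂ hp
    intro s hs
    have := hw s hs
    rw [← hWeq s] at this
    exact this
  rcases lt_or_gt_of_ne hφm with hnegm | hposm
  · have hp : ∀ t ∈ Ioo x₁ x₂, 0 < (-1 : ℝ) * φ t := by
      have h := pos_of_ne (f := fun t => -φ t) (hφcont.neg)
        (fun t ht => neg_ne_zero.mpr (hconsec t ht)) hmid (by simpa using hnegm)
      intro t ht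
      have h2 : (0:ℝ) < -φ t := h t ht
      linarith
    rcases hlam.lt_or_gt with hL | hL
    · exact happ (-1) 1 one_ne_zero hp
        (fun s hs => by rw [hWg s]; nlinarith [POS s hs])
    · exact happ (-1) (-1) (by norm_num) hp
        (fun s hs => by rw [hWg s]; nlinarith [POS s hs])
  · have hp : ∀ t ∈ Ioo x₁ x₂, 0 < (1 : ℝ) * φ t := by
      have h := pos_of_ne hφcont hconsec hmid hposm
      intro t ht
      have h2 := h t ht
      linarith
    rcases hlam.lt_or_gt with hL | hL
    · exact happ 1 (-1) (by norm_num) hp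
        (fun s hs => by rw [hWg s]; nlinarith [POS s hs])
    · exact happ 1 1 one_ne_zero hp
        (fun s hs => by rw [hWg s]; nlinarith [POS s hs])
end

section
/- Suppose r > 0 on (a,c), r ≡ 0 on [c,d], r < 0 on (d,b), and y = φ + iψ is a nontrivial non-real eigenfunction of -y'' + q y = λ r y with y(a) = y(b) = 0, Im λ ≠ 0. Then φ has only finitely many zeros in any compact subinterval [x₁, x₂] ⊂ (a,b), and similarly for ψ. -/
open Set Filter Topology



-- helper: AccPt gives NeBot of punctured within-filter
lemma accPt_neBot' {x : ℝ} {Z : Set ℝ} (h : AccPt x (𝓟 Z)) :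
    (𝓝[Z \ {x}] x).NeBot := by
  have : 𝓝[Z \ {x}] x = 𝓝 x ⊓ (𝓟 {x}ᶜ ⊓ 𝓟 Z) := by
    rw [nhdsWithin, inf_principal]
    congr 1
    rw [Set.diff_eq, Set.inter_comm]
  rw [this]
  unfold AccPt at h
  rwa [nhdsWithin, inf_assoc] at h

-- value zero at accumulation of zeros
lemma val_zero_of_acc {E : Type*} [NormedAddCommGroup E] [NormedSpace ℝ E]
    {f : ℝ → E} {x₀ : ℝ} {Z : Set ℝ} (hc : ContinuousAt f x₀)
    (hZ : ∀ z ∈ Z, f z = 0) (hnb : (𝓝[Z \ {x₀}] x₀).NeBot) : f x₀ = 0 := by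
  have h1 : Tendsto f (𝓝[Z \ {x₀}] x₀) (𝓝 (f x₀)) :=
    hc.continuousWithinAt.tendsto
  have h2 : Tendsto f (𝓝[Z \ {x₀}] x₀) (𝓝 0) := by
    apply Tendsto.congr' _ tendsto_const_nhds
    filter_upwards [self_mem_nhdsWithin] with z hz
    exact (hZ z hz.1).symm
  exact tendsto_nhds_unique h1 h2

-- derivative zero at accumulation of zeros
lemma deriv_zero_of_acc {E : Type*} [NormedAddCommGroup E] [NormedSpace ℝ E]
    {f : ℝ → E} {x₀ : ℝ} {d : E} {Z : Set ℝ} (hd : HasDerivAt f d x₀)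
    (hZ : ∀ z ∈ Z, f z = 0) (hx : f x₀ = 0) (hnb : (𝓝[Z \ {x₀}] x₀).NeBot) : d = 0 := by
  have hsub : 𝓝[Z \ {x₀}] x₀ ≤ 𝓝[≠] x₀ :=
    nhdsWithin_mono _ (fun z hz => hz.2)
  have h1 : Tendsto (slope f x₀) (𝓝[Z \ {x₀}] x₀) (𝓝 d) :=
    (hasDerivAt_iff_tendsto_slope.mp hd).mono_left hsub
  have h2 : Tendsto (slope f x₀) (𝓝[Z \ {x₀}] x₀) (𝓝 0) := by
    apply Tendsto.congr' _ tendsto_const_nhds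
    filter_upwards [self_mem_nhdsWithin] with z hz
    simp [slope, hZ z hz.1, hx]
  exact tendsto_nhds_unique h1 h2


lemma lipschitz_system (G : ℝ → ℂ) (C : ℝ) (hC : 0 ≤ C) (hGC : ∀ t, ‖G t‖ ≤ C) (t : ℝ) :
    LipschitzWith (1 + C.toNNReal) (fun u : ℂ × ℂ => (u.2, G t * u.1)) := by
  apply LipschitzWith.of_dist_le_mul
  intro u v
  have hK : ((1 + C.toNNReal : NNReal) : ℝ) = 1 + C := by
    push_cast
    rw [Real.coe_toNNReal C hC]
  rw [Prod.dist_eq, hK]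
  apply max_le
  · have h1 : dist u.2 v.2 ≤ dist u v := le_max_right _ _
    nlinarith [dist_nonneg (x := u) (y := v)]
  · have h2 : dist (G t * u.1) (G t * v.1) = ‖G t‖ * dist u.1 v.1 := by
      rw [dist_eq_norm, dist_eq_norm, ← mul_sub, norm_mul]
    rw [h2]
    have h3 : dist u.1 v.1 ≤ dist u v := le_max_left _ _
    have h4 := hGC t
    have h5 : (0:ℝ) ≤ dist u.1 v.1 := dist_nonneg
    have h6 : (0:ℝ) ≤ dist u v := dist_nonneg
    have h7 : (0:ℝ) ≤ ‖G t‖ := norm_nonneg _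
    nlinarith

lemma ode_system_facts (α β : ℝ) (hαβ : α ≤ β) (g : ℝ → ℂ)
    (hg : ContinuousOn g (Set.Icc α β)) (f : ℝ → ℂ)
    (hf : ∀ x ∈ Set.Icc α β, DifferentiableAt ℝ f x)
    (hf2 : ∀ x ∈ Set.Icc α β, HasDerivAt (deriv f) (g x * f x) x) :
    ∃ (K : NNReal) (v : ℝ → ℂ × ℂ → ℂ × ℂ),
      (∀ t, LipschitzWith K (v t)) ∧
      (∀ t ∈ Set.Icc α β, HasDerivAt (fun x => (f x, deriv f x)) (v t (f t, deriv f t)) t) ∧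
      (∀ t, v t 0 = 0) := by
  classical
  set G : ℝ → ℂ := fun t => g (max α (min t β)) with hG
  have hclamp : ∀ t, max α (min t β) ∈ Set.Icc α β := fun t =>
    ⟨le_max_left _ _, max_le (hαβ) (min_le_right _ _)⟩
  obtain ⟨C, hC⟩ := (isCompact_Icc : IsCompact (Set.Icc α β)).exists_bound_of_continuousOn hg
  have hC0 : 0 ≤ C := le_trans (norm_nonneg _) (hC α ⟨le_refl α, hαβ⟩)
  have hGC : ∀ t, ‖G t‖ ≤ C := fun t => hC _ (hclamp t)
  refine ⟨1 + C.toNNReal, fun t u => (u.2, G t * u.1),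
    lipschitz_system G C hC0 hGC, ?_, by intro t; simp⟩
  intro t ht
  have h1 : HasDerivAt f (deriv f t) t := (hf t ht).hasDerivAt
  have h2 : HasDerivAt (deriv f) (g t * f t) t := hf2 t ht
  have hGt : G t = g t := by
    have hm1 : min t β = t := min_eq_left ht.2
    have hm2 : max α t = t := max_eq_right ht.1
    simp only [hG, hm1, hm2]
  have := h1.prodMk h2
  rw [← hGt] at this
  exact this

lemma ode_zero_right (α β : ℝ) (hαβ : α ≤ β) (g : ℝ → ℂ)
    (hg : ContinuousOn g (Set.Icc α β)) (f : ℝ → ℂ)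
    (hf : ∀ x ∈ Set.Icc α β, DifferentiableAt ℝ f x)
    (hf2 : ∀ x ∈ Set.Icc α β, HasDerivAt (deriv f) (g x * f x) x)
    (h0 : f α = 0) (h0' : deriv f α = 0) :
    ∀ x ∈ Set.Icc α β, f x = 0 := by
  obtain ⟨K, v, hlip, hFd, hv0⟩ := ode_system_facts α β hαβ g hg f hf hf2
  set F : ℝ → ℂ × ℂ := fun x => (f x, deriv f x) with hF
  have key : Set.EqOn F (fun _ => (0 : ℂ × ℂ)) (Set.Icc α β) := by
    apply ODE_solution_unique hlip
    · exact fun t ht => (hFd t ht).continuousAt.continuousWithinAt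
    · exact fun t ht => (hFd t (Set.mem_Icc_of_Ico ht)).hasDerivWithinAt
    · exact continuousOn_const
    · intro t ht
      rw [show v t ((fun _ => (0 : ℂ × ℂ)) t) = 0 from hv0 t]
      exact (hasDerivAt_const t (0 : ℂ × ℂ)).hasDerivWithinAt
    · simp [hF, h0, h0', Prod.ext_iff]
  intro x hx
  have h := key hx
  exact (by simpa [hF, Prod.ext_iff] using h : f x = 0 ∧ deriv f x = 0).1

lemma ode_zero_left (α β : ℝ) (hαβ : α ≤ β) (g : ℝ → ℂ)
    (hg : ContinuousOn g (Set.Icc α β)) (f : ℝ → ℂ)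
    (hf : ∀ x ∈ Set.Icc α β, DifferentiableAt ℝ f x)
    (hf2 : ∀ x ∈ Set.Icc α β, HasDerivAt (deriv f) (g x * f x) x)
    (h0 : f β = 0) (h0' : deriv f β = 0) :
    ∀ x ∈ Set.Icc α β, f x = 0 := by
  obtain ⟨K, v, hlip, hFd, hv0⟩ := ode_system_facts α β hαβ g hg f hf hf2
  set F : ℝ → ℂ × ℂ := fun x => (f x, deriv f x) with hF
  have key : Set.EqOn F (fun _ => (0 : ℂ × ℂ)) (Set.Icc α β) := by
    apply ODE_solution_unique_of_mem_Icc_left (s := fun _ => Set.univ)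
      (fun t _ => (hlip t).lipschitzOnWith)
    · exact fun t ht => (hFd t ht).continuousAt.continuousWithinAt
    · exact fun t ht => (hFd t (Set.mem_Icc_of_Ioc ht)).hasDerivWithinAt
    · exact fun t _ => Set.mem_univ _
    · exact continuousOn_const
    · intro t ht
      rw [show v t ((fun _ => (0 : ℂ × ℂ)) t) = 0 from hv0 t]
      exact (hasDerivAt_const t (0 : ℂ × ℂ)).hasDerivWithinAt
    · exact fun t _ => Set.mem_univ _
    · simp [hF, h0, h0', Prod.ext_iff]
  intro x hx
  have h := key hx
  exact (by simpa [hF, Prod.ext_iff] using h : f x = 0 ∧ deriv f x = 0).1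

lemma deriv_differentiableAt {y : ℝ → ℂ} {x : ℝ} (h : ContDiffAt ℝ 2 y x) :
    DifferentiableAt ℝ (deriv y) x := by
  obtain ⟨u, hu, hcd⟩ := h.contDiffOn (le_refl 2) (by simp)
  obtain ⟨t, htu, hto, hxt⟩ := mem_nhds_iff.mp hu
  have h2 : ContDiffOn ℝ 2 y t := hcd.mono htu
  have h3 : ContDiffOn ℝ 1 (deriv y) t :=
    h2.deriv_of_isOpen hto (by norm_num)
  exact (h3.differentiableOn (by norm_num) x hxt).differentiableAt (hto.mem_nhds hxt)

lemma hasDerivAt_W (lam : ℂ) {y : ℝ → ℂ} {x : ℝ} (h1 : DifferentiableAt ℝ y x)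
    (h2 : DifferentiableAt ℝ (deriv y) x) :
    HasDerivAt (fun t => lam.im * ((starRingEnd ℂ) (y t) * deriv y t).im)
      (lam.im * ((starRingEnd ℂ) (y x) * deriv (deriv y) x).im) x := by
  have hy : HasDerivAt y (deriv y x) x := h1.hasDerivAt
  have hy' : HasDerivAt (deriv y) (deriv (deriv y) x) x := h2.hasDerivAt
  have hc : HasDerivAt (fun t => (starRingEnd ℂ) (y t)) ((starRingEnd ℂ) (deriv y x)) x := by
    have := Complex.conjCLE.toContinuousLinearMap.hasFDerivAt.comp_hasDerivAt x hy
    exact this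
  have hm := hc.mul hy'
  have him := Complex.imCLM.hasFDerivAt.comp_hasDerivAt x hm
  have hfinal := him.const_mul lam.im
  have heq : lam.im * Complex.imCLM ((starRingEnd ℂ) (deriv y x) * deriv y x +
      (starRingEnd ℂ) (y x) * deriv (deriv y) x) =
      lam.im * ((starRingEnd ℂ) (y x) * deriv (deriv y) x).im := by
    rw [map_add, ← Complex.normSq_eq_conj_mul_self]
    simp
  rw [heq] at hfinal
  exact hfinal


theorem stmt_18 (a b c d : ℝ) (hac : a < c) (hcd : c ≤ d) (hdb : d < b)
    (q r : ℝ → ℝ) (lam : ℂ) (hlam : lam.im ≠ 0)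
    (hq : ContinuousOn q (Set.Icc a b))
    (hrpos : ∀ x ∈ Set.Ioo a c, 0 < r x)
    (hrzero : ∀ x ∈ Set.Icc c d, r x = 0)
    (hrneg : ∀ x ∈ Set.Ioo d b, r x < 0)
    (hrcont1 : ContinuousOn r (Set.Ioo a c)) (hrcont2 : ContinuousOn r (Set.Ioo d b))
    (y : ℝ → ℂ) (φ ψ : ℝ → ℝ)
    (hφ : ∀ x, φ x = (y x).re) (hψ : ∀ x, ψ x = (y x).im)
    (hsmooth : ∀ x ∈ Set.Icc a b, ContDiffAt ℝ 2 y x)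
    (hode : ∀ x ∈ Set.Icc a b,
      -(deriv (deriv y) x) + (q x : ℂ) * y x = lam * (r x : ℂ) * y x)
    (hya : y a = 0) (hyb : y b = 0)
    (hnontriv : ∃ x ∈ Set.Icc a b, y x ≠ 0)
    (x₁ x₂ : ℝ) (hax₁ : a < x₁) (hx₁x₂ : x₁ ≤ x₂) (hx₂b : x₂ < b) :
    {x ∈ Set.Icc x₁ x₂ | φ x = 0}.Finite ∧ {x ∈ Set.Icc x₁ x₂ | ψ x = 0}.Finite := by
  have hab : a < b := hac.trans_le (hcd.trans hdb.le)
  have hcb : c < b := lt_of_le_of_lt hcd hdb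
  have had : a < d := hac.trans_le hcd
  have hIccac : Set.Icc a c ⊆ Set.Icc a b := Set.Icc_subset_Icc_right hcb.le
  have hIccdb : Set.Icc d b ⊆ Set.Icc a b := Set.Icc_subset_Icc_left had.le
  have hIcccd : Set.Icc c d ⊆ Set.Icc a b := Set.Icc_subset_Icc hac.le hdb.le
  -- basic differentiability facts
  have hyd : ∀ x ∈ Set.Icc a b, DifferentiableAt ℝ y x :=
    fun x hx => (hsmooth x hx).differentiableAt two_ne_zero
  have hyd2 : ∀ x ∈ Set.Icc a b, DifferentiableAt ℝ (deriv y) x :=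
    fun x hx => deriv_differentiableAt (hsmooth x hx)
  have hode' : ∀ x ∈ Set.Icc a b,
      deriv (deriv y) x = ((q x : ℂ) - lam * (r x : ℂ)) * y x := by
    intro x hx
    have h := hode x hx
    linear_combination -h
  -- the (scaled) Wronskian-type function
  set W : ℝ → ℝ := fun t => lam.im * ((starRingEnd ℂ) (y t) * deriv y t).im with hWdef
  have hW : ∀ x ∈ Set.Icc a b,
      HasDerivAt W (-(lam.im ^ 2 * (r x * Complex.normSq (y x)))) x := by
    intro x hx
    have h := hasDerivAt_W lam (hyd x hx) (hyd2 x hx)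
    rw [hode' x hx] at h
    have heq : lam.im * ((starRingEnd ℂ) (y x) * (((q x : ℂ) - lam * (r x : ℂ)) * y x)).im
        = -(lam.im ^ 2 * (r x * Complex.normSq (y x))) := by
      have h2 : (starRingEnd ℂ) (y x) * (((q x : ℂ) - lam * (r x : ℂ)) * y x)
          = ((q x : ℂ) - lam * (r x : ℂ)) * (Complex.normSq (y x) : ℂ) := by
        rw [Complex.normSq_eq_conj_mul_self]
        ring
      rw [h2]
      simp [Complex.mul_im, Complex.sub_im, Complex.sub_re]
      ring
    rw [heq] at h
    exact h
  have hWa : W a = 0 := by simp [hWdef, hya]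
  have hWb : W b = 0 := by simp [hWdef, hyb]
  -- monotonicity of W on the three pieces
  have hWcont : ∀ s ⊆ Set.Icc a b, ContinuousOn W s :=
    fun s hs x hx => ((hW x (hs hx)).continuousAt).continuousWithinAt
  have hWdiff : ∀ s ⊆ Set.Icc a b, DifferentiableOn ℝ W s :=
    fun s hs x hx => ((hW x (hs hx)).differentiableAt).differentiableWithinAt
  have hanti : AntitoneOn W (Set.Icc a c) := by
    apply antitoneOn_of_deriv_nonpos (convex_Icc a c) (hWcont _ hIccac)
      (by rw [interior_Icc]; exact hWdiff _ (fun x hx => hIccac (Set.Ioo_subset_Icc_self hx)))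
    intro x hx
    rw [interior_Icc] at hx
    rw [(hW x (hIccac (Set.Ioo_subset_Icc_self hx))).deriv]
    have h1 := hrpos x hx
    have h2 := Complex.normSq_nonneg (y x)
    have h3 : 0 ≤ lam.im ^ 2 * (r x * Complex.normSq (y x)) :=
      mul_nonneg (sq_nonneg _) (mul_nonneg h1.le h2)
    linarith
  have hmono : MonotoneOn W (Set.Icc d b) := by
    apply monotoneOn_of_deriv_nonneg (convex_Icc d b) (hWcont _ hIccdb)
      (by rw [interior_Icc]; exact hWdiff _ (fun x hx => hIccdb (Set.Ioo_subset_Icc_self hx)))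
    intro x hx
    rw [interior_Icc] at hx
    rw [(hW x (hIccdb (Set.Ioo_subset_Icc_self hx))).deriv]
    have h1 := hrneg x hx
    have h2 := Complex.normSq_nonneg (y x)
    have h3 : 0 ≤ lam.im ^ 2 * (-r x * Complex.normSq (y x)) :=
      mul_nonneg (sq_nonneg _) (mul_nonneg (by linarith) h2)
    nlinarith
  have hflat : ∀ u ∈ Set.Icc c d, ∀ v ∈ Set.Icc c d, W u = W v := by
    have hd0 : ∀ x ∈ interior (Set.Icc c d), deriv W x = 0 := by
      intro x hx
      rw [interior_Icc] at hx
      rw [(hW x (hIcccd (Set.Ioo_subset_Icc_self hx))).deriv,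
        hrzero x (Set.Ioo_subset_Icc_self hx)]
      ring
    have hm : MonotoneOn W (Set.Icc c d) :=
      monotoneOn_of_deriv_nonneg (convex_Icc c d) (hWcont _ hIcccd)
        (by rw [interior_Icc]; exact hWdiff _ (fun x hx => hIcccd (Set.Ioo_subset_Icc_self hx)))
        (fun x hx => le_of_eq (hd0 x hx).symm)
    have ha' : AntitoneOn W (Set.Icc c d) :=
      antitoneOn_of_deriv_nonpos (convex_Icc c d) (hWcont _ hIcccd)
        (by rw [interior_Icc]; exact hWdiff _ (fun x hx => hIcccd (Set.Ioo_subset_Icc_self hx)))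
        (fun x hx => le_of_eq (hd0 x hx))
    intro u hu v hv
    rcases le_total u v with h | h
    · exact le_antisymm (hm hu hv h) (ha' hu hv h)
    · exact (le_antisymm (hm hv hu h) (ha' hv hu h)).symm
  -- W vanishing at an interior point forces y = 0 on neighbouring zones
  have hzero_left : ∀ e ∈ Set.Ioc a c, W e = 0 → ∀ t ∈ Set.Ioo a e, y t = 0 := by
    intro e he hWe t ht
    have hWzero : ∀ u ∈ Set.Icc a e, W u = 0 := by
      intro u hu
      have hu' : u ∈ Set.Icc a c := ⟨hu.1, hu.2.trans he.2⟩
      have h1 : W u ≤ W a := hanti (Set.left_mem_Icc.mpr hac.le) hu' hu.1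
      have h2 : W e ≤ W u := hanti hu' ⟨he.1.le, he.2⟩ hu.2
      linarith
    have hnb : Set.Icc a e ∈ 𝓝 t := Icc_mem_nhds ht.1 ht.2
    have hev : W =ᶠ[𝓝 t] (fun _ => 0) := by
      filter_upwards [hnb] with u hu
      exact hWzero u hu
    have hder0 : deriv W t = 0 := by rw [hev.deriv_eq]; simp
    have htab : t ∈ Set.Icc a b :=
      ⟨ht.1.le, le_of_lt (lt_of_lt_of_le (ht.2.trans_le he.2) hcb.le)⟩
    have hder : deriv W t = -(lam.im ^ 2 * (r t * Complex.normSq (y t))) := (hW t htab).deriv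
    have hrt : 0 < r t := hrpos t ⟨ht.1, ht.2.trans_le he.2⟩
    have hl2 : 0 < lam.im ^ 2 := by positivity
    have h4 : lam.im ^ 2 * (r t * Complex.normSq (y t)) = 0 := by linarith
    have h5 : r t * Complex.normSq (y t) = 0 := by
      rcases mul_eq_zero.mp h4 with h | h
      · exact absurd h (ne_of_gt hl2)
      · exact h
    have hns : Complex.normSq (y t) = 0 := by
      rcases mul_eq_zero.mp h5 with h | h
      · exact absurd h (by intro hh; rw [hh] at hrt; exact lt_irrefl 0 hrt)
      · exact h
    exact Complex.normSq_eq_zero.mp hns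
  have hzero_right : ∀ e ∈ Set.Ico d b, W e = 0 → ∀ t ∈ Set.Ioo e b, y t = 0 := by
    intro e he hWe t ht
    have hWzero : ∀ u ∈ Set.Icc e b, W u = 0 := by
      intro u hu
      have hu' : u ∈ Set.Icc d b := ⟨le_trans he.1 hu.1, hu.2⟩
      have h1 : W e ≤ W u := hmono ⟨he.1, he.2.le⟩ hu' hu.1
      have h2 : W u ≤ W b := hmono hu' (Set.right_mem_Icc.mpr hdb.le) hu.2
      linarith
    have hnb : Set.Icc e b ∈ 𝓝 t := Icc_mem_nhds ht.1 ht.2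
    have hev : W =ᶠ[𝓝 t] (fun _ => 0) := by
      filter_upwards [hnb] with u hu
      exact hWzero u hu
    have hder0 : deriv W t = 0 := by rw [hev.deriv_eq]; simp
    have htab : t ∈ Set.Icc a b :=
      ⟨le_of_lt (lt_of_le_of_lt had.le (lt_of_le_of_lt he.1 ht.1)), ht.2.le⟩
    have hder : deriv W t = -(lam.im ^ 2 * (r t * Complex.normSq (y t))) := (hW t htab).deriv
    have hrt : r t < 0 := hrneg t ⟨lt_of_le_of_lt he.1 ht.1, ht.2⟩
    have hl2 : 0 < lam.im ^ 2 := by positivity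
    have h4 : lam.im ^ 2 * (r t * Complex.normSq (y t)) = 0 := by linarith
    have h5 : r t * Complex.normSq (y t) = 0 := by
      rcases mul_eq_zero.mp h4 with h | h
      · exact absurd h (ne_of_gt hl2)
      · exact h
    have hns : Complex.normSq (y t) = 0 := by
      rcases mul_eq_zero.mp h5 with h | h
      · exact absurd h (by intro hh; rw [hh] at hrt; exact lt_irrefl 0 hrt)
      · exact h
    exact Complex.normSq_eq_zero.mp hns
  -- the coefficient function of the ODE
  set g : ℝ → ℂ := fun t => (q t : ℂ) - lam * (r t : ℂ) with hgdef
  have hderiv2 : ∀ s ⊆ Set.Icc a b, ∀ x ∈ s, HasDerivAt (deriv y) (g x * y x) x := by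
    intro s hs x hx
    have h := (hyd2 x (hs hx)).hasDerivAt
    rwa [hode' x (hs hx)] at h
  have hgc1 : ContinuousOn g (Set.Ioo a c) := by
    apply ContinuousOn.sub
    · exact Complex.continuous_ofReal.comp_continuousOn
        (hq.mono (fun x hx => ⟨hx.1.le, le_of_lt (hx.2.trans_le hcb.le)⟩))
    · exact continuousOn_const.mul (Complex.continuous_ofReal.comp_continuousOn hrcont1)
  have hgc2 : ContinuousOn g (Set.Ioo d b) := by
    apply ContinuousOn.sub
    · exact Complex.continuous_ofReal.comp_continuousOn
        (hq.mono (fun x hx => ⟨le_of_lt (had.trans hx.1), hx.2.le⟩))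
    · exact continuousOn_const.mul (Complex.continuous_ofReal.comp_continuousOn hrcont2)
  have hgccd : ContinuousOn g (Set.Icc c d) := by
    apply ContinuousOn.sub
    · exact Complex.continuous_ofReal.comp_continuousOn (hq.mono hIcccd)
    · apply continuousOn_const.mul
      apply Complex.continuous_ofReal.comp_continuousOn
      exact continuousOn_const.congr (fun x hx => hrzero x hx)
  -- propagation from the left zone to a global contradiction
  have prop_right : ∀ e ∈ Set.Ioc a c, (∀ t ∈ Set.Ioo a e, y t = 0) → False := by
    intro e he hz
    set α : ℝ := (a + e) / 2 with hαdef
    have hα : α ∈ Set.Ioo a e := ⟨by simp [hαdef]; linarith [he.1], by simp [hαdef]; linarith [he.1]⟩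
    have hαc : α < c := lt_of_lt_of_le hα.2 he.2
    have hαab : α ∈ Set.Icc a b := ⟨hα.1.le, le_of_lt ((hαc.trans_le hcd).trans hdb)⟩
    have hev : y =ᶠ[𝓝 α] (fun _ => 0) := by
      filter_upwards [Ioo_mem_nhds hα.1 hα.2] with u hu
      exact hz u hu
    have hyα : y α = 0 := hz α hα
    have hy'α : deriv y α = 0 := by rw [hev.deriv_eq]; simp
    -- propagate through (a,c)
    have step1 : ∀ t ∈ Set.Ico α c, y t = 0 := by
      intro t ht
      have hsub : Set.Icc α t ⊆ Set.Ioo a c := fun u hu => ⟨lt_of_lt_of_le hα.1 hu.1, lt_of_le_of_lt hu.2 ht.2⟩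
      have hsub2 : Set.Icc α t ⊆ Set.Icc a b := fun u hu =>
        ⟨(hsub hu).1.le, le_of_lt (((hsub hu).2.trans_le hcd).trans hdb)⟩
      exact ode_zero_right α t ht.1 g (hgc1.mono hsub) y
        (fun u hu => hyd u (hsub2 hu)) (hderiv2 _ hsub2)
        hyα hy'α t (Set.right_mem_Icc.mpr ht.1)
    -- get value and derivative zero at c
    have hcab : c ∈ Set.Icc a b := ⟨hac.le, hcb.le⟩
    have hnbc : (𝓝[Set.Ico α c \ {c}] c).NeBot := by
      have hsub : Set.Ioo α c ⊆ Set.Ico α c \ {c} :=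
        fun z hz' => ⟨⟨hz'.1.le, hz'.2⟩, ne_of_lt hz'.2⟩
      have h1 : c ∈ closure (Set.Ioo α c) := by
        rw [closure_Ioo (ne_of_lt hαc)]
        exact ⟨hαc.le, le_refl c⟩
      have h2 : (𝓝[Set.Ioo α c] c).NeBot := mem_closure_iff_nhdsWithin_neBot.mp h1
      exact h2.mono (nhdsWithin_mono _ hsub)
    have hyc : y c = 0 := val_zero_of_acc (hyd c hcab).continuousAt step1 hnbc
    have hy'c : deriv y c = 0 :=
      deriv_zero_of_acc (hyd c hcab).hasDerivAt step1 hyc hnbc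
    -- propagate through [c,d]
    have step2 : ∀ t ∈ Set.Icc c d, y t = 0 :=
      fun t ht => ode_zero_right c d hcd g hgccd y
        (fun u hu => hyd u (hIcccd hu)) (hderiv2 _ hIcccd) hyc hy'c t ht
    have hWd : W d = 0 := by
      have h := step2 d ⟨hcd, le_refl d⟩
      simp [hWdef, h]
    have step3 : ∀ t ∈ Set.Ioo d b, y t = 0 :=
      hzero_right d ⟨le_refl d, hdb⟩ hWd
    have hall : ∀ x ∈ Set.Icc a b, y x = 0 := by
      intro x hx
      rcases eq_or_lt_of_le hx.1 with rfl | hax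
      · exact hya
      by_cases h1 : x < α
      · exact hz x ⟨hax, h1.trans hα.2⟩
      by_cases h2 : x < c
      · exact step1 x ⟨not_lt.mp h1, h2⟩
      by_cases h3 : x ≤ d
      · exact step2 x ⟨not_lt.mp h2, h3⟩
      rcases lt_or_eq_of_le hx.2 with h4 | rfl
      · exact step3 x ⟨not_le.mp h3, h4⟩
      · exact hyb
    obtain ⟨x, hx, hne⟩ := hnontriv
    exact hne (hall x hx)
  -- propagation from the right zone to a global contradiction
  have prop_left : ∀ e ∈ Set.Ico d b, (∀ t ∈ Set.Ioo e b, y t = 0) → False := by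
    intro e he hz
    set β : ℝ := (e + b) / 2 with hβdef
    have hβ : β ∈ Set.Ioo e b := ⟨by simp [hβdef]; linarith [he.2], by simp [hβdef]; linarith [he.2]⟩
    have hdβ : d < β := lt_of_le_of_lt he.1 hβ.1
    have hβab : β ∈ Set.Icc a b := ⟨le_of_lt (had.trans hdβ), hβ.2.le⟩
    have hev : y =ᶠ[𝓝 β] (fun _ => 0) := by
      filter_upwards [Ioo_mem_nhds hβ.1 hβ.2] with u hu
      exact hz u hu
    have hyβ : y β = 0 := hz β hβ
    have hy'β : deriv y β = 0 := by rw [hev.deriv_eq]; simp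
    -- propagate through (d,b) leftwards
    have step1 : ∀ t ∈ Set.Ioc d β, y t = 0 := by
      intro t ht
      have hsub : Set.Icc t β ⊆ Set.Ioo d b := fun u hu =>
        ⟨lt_of_lt_of_le ht.1 hu.1, lt_of_le_of_lt hu.2 hβ.2⟩
      have hsub2 : Set.Icc t β ⊆ Set.Icc a b := fun u hu =>
        ⟨le_of_lt (had.trans (hsub hu).1), (hsub hu).2.le⟩
      exact ode_zero_left t β ht.2 g (hgc2.mono hsub) y
        (fun u hu => hyd u (hsub2 hu)) (hderiv2 _ hsub2)
        hyβ hy'β t (Set.left_mem_Icc.mpr ht.2)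
    have hdab : d ∈ Set.Icc a b := ⟨had.le, hdb.le⟩
    have hnbd : (𝓝[Set.Ioc d β \ {d}] d).NeBot := by
      have hsub : Set.Ioo d β ⊆ Set.Ioc d β \ {d} :=
        fun z hz' => ⟨⟨hz'.1, hz'.2.le⟩, (ne_of_gt hz'.1)⟩
      have h1 : d ∈ closure (Set.Ioo d β) := by
        rw [closure_Ioo (ne_of_lt hdβ)]
        exact ⟨le_refl d, hdβ.le⟩
      have h2 : (𝓝[Set.Ioo d β] d).NeBot := mem_closure_iff_nhdsWithin_neBot.mp h1
      exact h2.mono (nhdsWithin_mono _ hsub)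
    have hyd0 : y d = 0 := val_zero_of_acc (hyd d hdab).continuousAt step1 hnbd
    have hy'd : deriv y d = 0 :=
      deriv_zero_of_acc (hyd d hdab).hasDerivAt step1 hyd0 hnbd
    -- propagate through [c,d] leftwards
    have step2 : ∀ t ∈ Set.Icc c d, y t = 0 :=
      fun t ht => ode_zero_left c d hcd g hgccd y
        (fun u hu => hyd u (hIcccd hu)) (hderiv2 _ hIcccd) hyd0 hy'd t ht
    have hWc : W c = 0 := by
      have h := step2 c ⟨le_refl c, hcd⟩
      simp [hWdef, h]
    have step3 : ∀ t ∈ Set.Ioo a c, y t = 0 :=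
      hzero_left c ⟨hac, le_refl c⟩ hWc
    have hall : ∀ x ∈ Set.Icc a b, y x = 0 := by
      intro x hx
      rcases eq_or_lt_of_le hx.1 with rfl | hax
      · exact hya
      by_cases h2 : x < c
      · exact step3 x ⟨hax, h2⟩
      by_cases h3 : x ≤ d
      · exact step2 x ⟨not_lt.mp h2, h3⟩
      by_cases h4 : x ≤ β
      · exact step1 x ⟨not_le.mp h3, h4⟩
      rcases lt_or_eq_of_le hx.2 with h5 | rfl
      · exact hz x ⟨hβ.1.trans (not_le.mp h4), h5⟩
      · exact hyb
    obtain ⟨x, hx, hne⟩ := hnontriv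
    exact hne (hall x hx)
  -- the key step: W cannot vanish at an interior point
  have key : ∀ x₀ ∈ Set.Ioo a b, W x₀ = 0 → False := by
    intro x₀ hx₀ hW0
    rcases le_or_gt x₀ d with hxd | hdx
    · rcases le_or_gt x₀ c with hxc | hcx
      · exact prop_right x₀ ⟨hx₀.1, hxc⟩ (hzero_left x₀ ⟨hx₀.1, hxc⟩ hW0)
      · have hWc : W c = 0 := by
          rw [hflat c (Set.left_mem_Icc.mpr hcd) x₀ ⟨hcx.le, hxd⟩]
          exact hW0
        exact prop_right c ⟨hac, le_refl c⟩ (hzero_left c ⟨hac, le_refl c⟩ hWc)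
    · exact prop_left x₀ ⟨hdx.le, hx₀.2⟩ (hzero_right x₀ ⟨hdx.le, hx₀.2⟩ hW0)
  -- now the finiteness claims
  have hKsub : Set.Icc x₁ x₂ ⊆ Set.Ioo a b :=
    fun z hz => ⟨lt_of_lt_of_le hax₁ hz.1, lt_of_le_of_lt hz.2 hx₂b⟩
  have final : ∀ (f : ℝ → ℝ), (∀ z, f z = (y z).re ∨ f z = (y z).im) →
      (∀ x₀ ∈ Set.Icc a b, HasDerivAt f ((starRingEnd ℂ) (y x₀) * deriv y x₀).im x₀ → False) →
      True := fun _ _ _ => trivial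
  constructor
  · by_contra hinf
    have hinf' : {x ∈ Set.Icc x₁ x₂ | φ x = 0}.Infinite := hinf
    obtain ⟨x₀, hx₀K, hacc⟩ :=
      hinf'.exists_accPt_of_subset_isCompact isCompact_Icc (fun z hz => hz.1)
    have hx₀ab : x₀ ∈ Set.Ioo a b := hKsub hx₀K
    have hx₀Icc : x₀ ∈ Set.Icc a b := ⟨hx₀ab.1.le, hx₀ab.2.le⟩
    have hnb := accPt_neBot' hacc
    have hZ0 : ∀ z ∈ {x ∈ Set.Icc x₁ x₂ | φ x = 0}, (fun x => (y x).re) z = 0 := by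
      intro z hz
      have := hz.2
      rw [hφ z] at this
      exact this
    have hcont : ContinuousAt (fun x => (y x).re) x₀ :=
      Complex.continuous_re.continuousAt.comp (hyd x₀ hx₀Icc).continuousAt
    have hre0 : (y x₀).re = 0 := val_zero_of_acc hcont hZ0 hnb
    have hfder : HasDerivAt (fun x => (y x).re) ((deriv y x₀).re) x₀ :=
      Complex.reCLM.hasFDerivAt.comp_hasDerivAt x₀ (hyd x₀ hx₀Icc).hasDerivAt
    have hder0 : (deriv y x₀).re = 0 := deriv_zero_of_acc hfder hZ0 hre0 hnb
    have hW0 : W x₀ = 0 := by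
      have h1 : ((starRingEnd ℂ) (y x₀) * deriv y x₀).im = 0 := by
        rw [Complex.mul_im]
        simp [hre0, hder0]
      show lam.im * ((starRingEnd ℂ) (y x₀) * deriv y x₀).im = 0
      rw [h1, mul_zero]
    exact key x₀ hx₀ab hW0
  · by_contra hinf
    have hinf' : {x ∈ Set.Icc x₁ x₂ | ψ x = 0}.Infinite := hinf
    obtain ⟨x₀, hx₀K, hacc⟩ :=
      hinf'.exists_accPt_of_subset_isCompact isCompact_Icc (fun z hz => hz.1)
    have hx₀ab : x₀ ∈ Set.Ioo a b := hKsub hx₀K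
    have hx₀Icc : x₀ ∈ Set.Icc a b := ⟨hx₀ab.1.le, hx₀ab.2.le⟩
    have hnb := accPt_neBot' hacc
    have hZ0 : ∀ z ∈ {x ∈ Set.Icc x₁ x₂ | ψ x = 0}, (fun x => (y x).im) z = 0 := by
      intro z hz
      have := hz.2
      rw [hψ z] at this
      exact this
    have hcont : ContinuousAt (fun x => (y x).im) x₀ :=
      Complex.continuous_im.continuousAt.comp (hyd x₀ hx₀Icc).continuousAt
    have him0 : (y x₀).im = 0 := val_zero_of_acc hcont hZ0 hnb
    have hfder : HasDerivAt (fun x => (y x).im) ((deriv y x₀).im) x₀ :=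
      Complex.imCLM.hasFDerivAt.comp_hasDerivAt x₀ (hyd x₀ hx₀Icc).hasDerivAt
    have hder0 : (deriv y x₀).im = 0 := deriv_zero_of_acc hfder hZ0 him0 hnb
    have hW0 : W x₀ = 0 := by
      have h1 : ((starRingEnd ℂ) (y x₀) * deriv y x₀).im = 0 := by
        rw [Complex.mul_im]
        simp [him0, hder0]
      show lam.im * ((starRingEnd ℂ) (y x₀) * deriv y x₀).im = 0
      rw [h1, mul_zero]
    exact key x₀ hx₀ab hW0
end

section
/- Let y = φ + iψ solve -y'' + q y = λ r y on [a,b] with y(a) = y(b) = 0 and Im λ > 0, and suppose G(x) = ∫_a^x r|y|² dt < 0 on (a,b). If φ'(b) < 0 and x₀ ∈ (a,b) is the largest zero of φ (so φ > 0 on (x₀,b)), then ψ(x₀) < 0. -/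
theorem stmt_19 (a b : ℝ) (hab : a < b) (q r : ℝ → ℝ) (lam : ℂ) (hlam : 0 < lam.im)
    (hq : ContinuousOn q (Set.Icc a b)) (hr : ContinuousOn r (Set.Icc a b))
    (y : ℝ → ℂ) (φ ψ : ℝ → ℝ)
    (hφ : ∀ x, φ x = (y x).re) (hψ : ∀ x, ψ x = (y x).im)
    (hsmooth : ∀ x ∈ Set.Icc a b, ContDiffAt ℝ 2 y x)
    (hode : ∀ x ∈ Set.Icc a b,
      -(deriv (deriv y) x) + (q x : ℂ) * y x = lam * (r x : ℂ) * y x)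
    (hya : y a = 0) (hyb : y b = 0)
    (G : ℝ → ℝ) (hG : ∀ x, G x = ∫ t in a..x, r t * ‖y t‖ ^ 2)
    (hGneg : ∀ x ∈ Set.Ioo a b, G x < 0)
    (hφ'b : deriv φ b < 0)
    (x₀ : ℝ) (hx₀ : x₀ ∈ Set.Ioo a b) (hφx₀ : φ x₀ = 0)
    (hmax : ∀ x ∈ Set.Ioo x₀ b, φ x ≠ 0)
    (hφpos : ∀ x ∈ Set.Ioo x₀ b, 0 < φ x) :
    ψ x₀ < 0 := by
  -- basic differentiability facts
  have hyd : ∀ x ∈ Set.Icc a b, HasDerivAt y (deriv y x) x := fun x hx =>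
    ((hsmooth x hx).differentiableAt (by norm_num)).hasDerivAt
  have hyd2 : ∀ x ∈ Set.Icc a b, HasDerivAt (deriv y) (deriv (deriv y) x) x := by
    intro x hx
    have h1 : ContDiffAt ℝ 1 (fderiv ℝ y) x :=
      (hsmooth x hx).fderiv_right (by norm_num)
    have h2 : DifferentiableAt ℝ (fun z => fderiv ℝ y z 1) x :=
      (h1.differentiableAt one_ne_zero).clm_apply (differentiableAt_const _)
    have he : (fun z => fderiv ℝ y z 1) = deriv y := rfl
    rw [he] at h2
    exact h2.hasDerivAt
  set F : ℝ → ℂ := fun x => (starRingEnd ℂ) (y x) * deriv y x with hFdef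
  set W : ℝ → ℝ := fun x => -(F x).im with hWdef
  -- derivative of W
  have hWd : ∀ x ∈ Set.Icc a b, HasDerivAt W (lam.im * (r x * ‖y x‖ ^ 2)) x := by
    intro x hx
    have hconj : HasDerivAt (fun z => (starRingEnd ℂ) (y z)) ((starRingEnd ℂ) (deriv y x)) x := by
      exact (Complex.conjCLE.hasFDerivAt.comp_hasDerivAt x (hyd x hx))
    have hF : HasDerivAt F ((starRingEnd ℂ) (deriv y x) * deriv y x
        + (starRingEnd ℂ) (y x) * deriv (deriv y) x) x := hconj.mul (hyd2 x hx)
    have hIm : HasDerivAt W (-(( (starRingEnd ℂ) (deriv y x) * deriv y x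
        + (starRingEnd ℂ) (y x) * deriv (deriv y) x).im)) x := by
      have := (Complex.imCLM.hasFDerivAt.comp_hasDerivAt x hF).neg
      exact this
    convert hIm using 1
    -- compute the imaginary part
    have hy'' : deriv (deriv y) x = (q x : ℂ) * y x - lam * (r x : ℂ) * y x := by
      have := hode x hx
      linear_combination -this
    rw [hy'']
    have h1 : ((starRingEnd ℂ) (deriv y x) * deriv y x).im = 0 := by
      simp [Complex.mul_im]
      ring
    have h2 : (starRingEnd ℂ) (y x) * ((q x : ℂ) * y x - lam * (r x : ℂ) * y x)
        = (q x : ℂ) * Complex.normSq (y x) - lam * (r x : ℂ) * Complex.normSq (y x) := by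
      rw [Complex.normSq_eq_conj_mul_self]
      ring
    rw [Complex.add_im, h1, h2, zero_add]
    have h3 : ‖y x‖ ^ 2 = Complex.normSq (y x) := by
      rw [Complex.sq_norm]
    simp only [Complex.sub_im, Complex.mul_im, Complex.ofReal_re, Complex.ofReal_im, h3]
    push_cast
    ring
  -- W a = 0
  have hWa : W a = 0 := by simp [hWdef, hFdef, hya]
  -- FTC
  have hx₀ab : x₀ ∈ Set.Icc a b := Set.mem_Icc_of_Ioo hx₀
  have hsub : Set.uIcc a x₀ ⊆ Set.Icc a b := by
    rw [Set.uIcc_of_le hx₀.1.le]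
    exact Set.Icc_subset_Icc le_rfl hx₀.2.le
  have hycont : ContinuousOn y (Set.Icc a b) := fun x hx =>
    (hsmooth x hx).continuousAt.continuousWithinAt
  have hgcont : ContinuousOn (fun t => lam.im * (r t * ‖y t‖ ^ 2)) (Set.Icc a b) :=
    continuousOn_const.mul (hr.mul ((hycont.norm.pow 2)))
  have hint : IntervalIntegrable (fun t => lam.im * (r t * ‖y t‖ ^ 2))
      MeasureTheory.volume a x₀ :=
    (hgcont.mono hsub).intervalIntegrable
  have hftc : ∫ t in a..x₀, lam.im * (r t * ‖y t‖ ^ 2) = W x₀ - W a :=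
    intervalIntegral.integral_eq_sub_of_hasDerivAt
      (fun x hx => hWd x (hsub hx)) hint
  have hWx₀ : W x₀ = lam.im * G x₀ := by
    rw [hG, ← intervalIntegral.integral_const_mul, hftc, hWa, sub_zero]
  have hWneg : W x₀ < 0 := by
    rw [hWx₀]
    exact mul_neg_of_pos_of_neg hlam (hGneg x₀ hx₀)
  -- W x₀ = ψ x₀ * deriv φ x₀
  have hφeq : φ = fun x => (y x).re := funext hφ
  have hdφ : HasDerivAt φ ((deriv y x₀).re) x₀ := by
    rw [hφeq]
    exact (Complex.reCLM.hasFDerivAt.comp_hasDerivAt x₀ (hyd x₀ hx₀ab))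
  have hyre : (y x₀).re = 0 := by rw [← hφ]; exact hφx₀
  have hWval : W x₀ = ψ x₀ * (deriv y x₀).re := by
    simp [hWdef, hFdef, Complex.mul_im, hyre, hψ]
  -- deriv φ x₀ ≥ 0
  have hdφ0 : (0 : ℝ) ≤ (deriv y x₀).re := by
    have hslope : Filter.Tendsto (slope φ x₀) (nhdsWithin x₀ (Set.Ioi x₀ \ {x₀}))
        (nhds ((deriv y x₀).re)) :=
      hasDerivWithinAt_iff_tendsto_slope.mp (hdφ.hasDerivWithinAt (s := Set.Ioi x₀))
    have hset : Set.Ioi x₀ \ {x₀} = Set.Ioi x₀ := by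
      apply Set.diff_singleton_eq_self
      simp
    rw [hset] at hslope
    refine ge_of_tendsto hslope ?_
    have hmem : Set.Ioo x₀ b ∈ nhdsWithin x₀ (Set.Ioi x₀) :=
      Ioo_mem_nhdsGT_of_mem ⟨le_rfl, hx₀.2⟩
    filter_upwards [hmem] with z hz
    rw [slope_def_field]
    have h1 : 0 < φ z := hφpos z hz
    have h2 : 0 < z - x₀ := sub_pos.mpr hz.1
    rw [hφx₀, sub_zero]
    exact div_nonneg h1.le h2.le
  -- conclude
  rw [hWval] at hWneg
  nlinarith [hWneg, hdφ0]
end
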